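/- arXiv:1610.09230 — 5 statements merged into one kernel-verified Lean document; each statement's English description precedes it below -/
import Mathlib

section
/- Let (Ω, F, P) be a probability space and Ψ : Ω × ℝ^d → ℝ ∪ {-∞} such that Ψ(ω, ·) is concave for every ω, Ψ(ω, x) ≤ C for a uniform constant C, Ψ is jointly measurable, and there exists h° ∈ ℝ^d with E^P[Ψ(h°)] > -∞. Define Φ(h) := E^P[Ψ(h)]. Then Φ^∞(h) = E^P[Ψ^∞(h)] for all h ∈ ℝ^d (with values in ℝ ∪ {-∞}), where Ψ^∞(ω, ·) denotes the horizon function of Ψ(ω, ·). -/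
open MeasureTheory Filter
open scoped ENNReal

/-- Concavity for extended-real-valued functions (values in `ℝ ∪ {-∞} ⊆ EReal`). -/
def IsConcaveE {E : Type*} [AddCommGroup E] [Module ℝ E] (f : E → EReal) : Prop :=
  ∀ x y : E, ∀ a b : ℝ, 0 ≤ a → 0 ≤ b → a + b = 1 →
    (a : EReal) * f x + (b : EReal) * f y ≤ f (a • x + b • y)

/-- Horizon (recession) function of `f` with base point `x`:
`f^∞(h) = inf_{n ∈ ℕ+} (1/n) (f (x + n h) - f x)`. -/
noncomputable def hor {E : Type*} [AddCommGroup E] [Module ℝ E]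
    (f : E → EReal) (x h : E) : EReal :=
  ⨅ n : ℕ+, ((n : ℝ)⁻¹ : EReal) * (f (x + (n : ℝ) • h) - f x)

/-- The canonical map `EReal → ℝ≥0∞` (sending `⊤` to `⊤` and negatives to `0`). -/
noncomputable def erealToENNReal (x : EReal) : ℝ≥0∞ :=
  if x = ⊤ then ⊤ else ENNReal.ofReal x.toReal

/-- Expectation of a function `g : Ω → ℝ ∪ {-∞}` bounded above by the constant `C`,
with values in `ℝ ∪ {-∞} ⊆ EReal`: `E[g] = C - ∫⁻ (C - g)`. -/
noncomputable def expE {Ω : Type*} [MeasurableSpace Ω] (P : Measure Ω) (C : ℝ)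
    (g : Ω → EReal) : EReal :=
  (C : EReal) - ENNReal.toEReal (∫⁻ ω, erealToENNReal ((C : EReal) - g ω) ∂P)


lemma st5_e_top : erealToENNReal ⊤ = ⊤ := by simp [erealToENNReal]

lemma st5_e_coe (x : ℝ) : erealToENNReal (x : EReal) = ENNReal.ofReal x := by
  simp [erealToENNReal]

lemma st5_e_mono : Monotone erealToENNReal := by
  intro x y hxy
  unfold erealToENNReal
  split_ifs with hx hy hy
  · rfl
  · exact absurd (top_le_iff.1 (hx ▸ hxy)) hy
  · exact le_top
  · rcases eq_or_ne x ⊥ with rfl | hxb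
    · simp
    · exact ENNReal.ofReal_le_ofReal (EReal.toReal_le_toReal hxy hxb hy)

lemma st5_e_coe_ennreal (w : ℝ≥0∞) : erealToENNReal (w : EReal) = w := by
  rcases eq_or_ne w ⊤ with rfl | hw
  · simp [erealToENNReal]
  · rw [show ((w : EReal)) = ((w.toReal : ℝ) : EReal) by
      rw [← EReal.toReal_coe_ennreal (x := w)]
      exact (EReal.coe_toReal (by simp [EReal.coe_ennreal_eq_top_iff, hw]) (by simp)).symm]
    rw [st5_e_coe, ENNReal.ofReal_toReal hw]

lemma st5_coe_sub_sub_cancel (c : ℝ) (x : EReal) :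
    (c : EReal) - ((c : EReal) - x) = x := by
  induction x using EReal.rec with
  | bot => rw [EReal.coe_sub_bot, EReal.sub_top]
  | coe x => rw [← EReal.coe_sub, ← EReal.coe_sub]; norm_num
  | top => rw [EReal.sub_top, EReal.coe_sub_bot]

lemma st5_coe_sub_iInf {ι : Type*} [Nonempty ι] (c : ℝ) (q : ι → EReal) :
    (c : EReal) - ⨅ i, q i = ⨆ i, ((c : EReal) - q i) := by
  apply le_antisymm
  · have h1 : ∀ i, (c : EReal) - ⨆ j, ((c : EReal) - q j) ≤ q i := by
      intro i
      calc (c : EReal) - ⨆ j, ((c : EReal) - q j)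
          ≤ (c : EReal) - ((c : EReal) - q i) :=
            EReal.sub_le_sub le_rfl (le_iSup (fun j => (c : EReal) - q j) i)
        _ = q i := st5_coe_sub_sub_cancel c _
    have h2 : (c : EReal) - ⨆ j, ((c : EReal) - q j) ≤ ⨅ i, q i := le_iInf h1
    calc (c : EReal) - ⨅ i, q i
        ≤ (c : EReal) - ((c : EReal) - ⨆ j, ((c : EReal) - q j)) :=
          EReal.sub_le_sub le_rfl h2
      _ = _ := st5_coe_sub_sub_cancel c _
  · exact iSup_le fun i => EReal.sub_le_sub le_rfl (iInf_le q i)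

lemma st5_e_iSup {ι : Type*} [Nonempty ι] (s : ι → EReal) (hs : ∀ i, 0 ≤ s i) :
    erealToENNReal (⨆ i, s i) = ⨆ i, erealToENNReal (s i) := by
  apply le_antisymm
  · rcases eq_or_ne (⨆ i, erealToENNReal (s i)) ⊤ with hT | hT
    · rw [hT]; exact le_top
    · set T := ⨆ i, erealToENNReal (s i) with hTdef
      have hle : ∀ i, s i ≤ ((T.toReal : ℝ) : EReal) := by
        intro i
        have hi : erealToENNReal (s i) ≤ T := le_iSup (fun i => erealToENNReal (s i)) i
        have hsitop : s i ≠ ⊤ := by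
          intro h
          rw [h, st5_e_top, top_le_iff] at hi
          exact hT hi
        have hsibot : s i ≠ ⊥ := ne_of_gt (lt_of_lt_of_le (bot_lt_iff_ne_bot.2 (by simp) : (⊥:EReal) < 0) (hs i))
        rw [← EReal.coe_toReal hsitop hsibot] at hi ⊢
        rw [st5_e_coe] at hi
        exact EReal.coe_le_coe_iff.2 ((ENNReal.ofReal_le_iff_le_toReal hT).1 hi)
      have hsup : (⨆ i, s i) ≤ ((T.toReal : ℝ) : EReal) := iSup_le hle
      have hne_top : (⨆ i, s i) ≠ ⊤ := ne_top_of_le_ne_top (EReal.coe_ne_top _) hsup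
      have hne_bot : (⨆ i, s i) ≠ ⊥ := by
        obtain ⟨i⟩ := ‹Nonempty ι›
        exact ne_of_gt (lt_of_lt_of_le (bot_lt_iff_ne_bot.2 (by simp) : (⊥:EReal) < 0) ((hs i).trans (le_iSup s i)))
      rw [← EReal.coe_toReal hne_top hne_bot, st5_e_coe]
      calc ENNReal.ofReal (⨆ i, s i).toReal ≤ ENNReal.ofReal T.toReal :=
            ENNReal.ofReal_le_ofReal (EReal.toReal_le_toReal hsup hne_bot (EReal.coe_ne_top _))
        _ = T := ENNReal.ofReal_toReal hT
  · exact iSup_le fun i => st5_e_mono (le_iSup s i)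

lemma st5_P3 (x : EReal) (hx : x ≤ 0) :
    (0 : EReal) - ((erealToENNReal ((0 : EReal) - x) : ℝ≥0∞) : EReal) = x := by
  induction x using EReal.rec with
  | bot =>
    rw [show (0:EReal) - ⊥ = ⊤ by rw [← EReal.coe_zero, EReal.coe_sub_bot], st5_e_top,
      EReal.coe_ennreal_top, EReal.sub_top]
  | coe x =>
    rw [show (0:EReal) - (x:EReal) = ((-x : ℝ) : EReal) by
        rw [← EReal.coe_zero, ← EReal.coe_sub]; norm_num,
      st5_e_coe, EReal.coe_ennreal_ofReal,
      max_eq_left (by linarith [EReal.coe_le_coe_iff.1 (by exact_mod_cast hx : (x:EReal) ≤ ((0:ℝ):EReal))]),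
      ← EReal.coe_zero, ← EReal.coe_sub]
    norm_num
  | top => exact absurd hx (by simp)

lemma st5_pnat_pos (n : ℕ+) : (0:ℝ) < (n : ℝ) := by exact_mod_cast n.pos

lemma st5_P1 (Cr r : ℝ) (hr : r ≤ Cr) (v : EReal) (hv : v ≤ (Cr : EReal)) (n : ℕ+) :
    erealToENNReal ((Cr : EReal) - (r : EReal) - ((n : ℝ)⁻¹ : EReal) * (v - (r : EReal)))
      = (((n : ℕ) : ℝ≥0∞))⁻¹ * erealToENNReal ((Cr : EReal) - v)
        + (1 - ((n : ℕ) : ℝ≥0∞)⁻¹) * erealToENNReal ((Cr : EReal) - (r : EReal)) := by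
  have hn : (0:ℝ) < (n : ℝ) := st5_pnat_pos n
  have hinv_ne : (((n : ℕ) : ℝ≥0∞))⁻¹ ≠ 0 := ENNReal.inv_ne_zero.2 (ENNReal.natCast_ne_top _)
  rw [show (((n : ℝ) : EReal))⁻¹ = (((n:ℝ)⁻¹ : ℝ) : EReal) from (EReal.coe_inv _).symm]
  induction v using EReal.rec with
  | top => exact absurd hv (by simp [lt_top_iff_ne_top])
  | bot =>
    rw [show (⊥ : EReal) - (r : EReal) = ⊥ from EReal.bot_sub _,
      EReal.coe_mul_bot_of_pos (by exact_mod_cast inv_pos.2 hn),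
      show (Cr : EReal) - (r : EReal) = ((Cr - r : ℝ) : EReal) from (EReal.coe_sub _ _).symm,
      EReal.coe_sub_bot, st5_e_top, EReal.coe_sub_bot, st5_e_top, ENNReal.mul_top hinv_ne]
    rw [top_add]
  | coe s =>
    have hs : s ≤ Cr := EReal.coe_le_coe_iff.1 hv
    have h1 : (((n:ℝ)⁻¹ : ℝ) : EReal) * ((s : EReal) - (r : EReal))
        = (((n:ℝ)⁻¹ * (s - r) : ℝ) : EReal) := by
      rw [← EReal.coe_sub, ← EReal.coe_mul]
    rw [h1, show (Cr : EReal) - (r : EReal) = ((Cr - r : ℝ) : EReal) from (EReal.coe_sub _ _).symm,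
      show ((Cr - r : ℝ) : EReal) - (((n:ℝ)⁻¹ * (s - r) : ℝ) : EReal)
        = ((Cr - r - (n:ℝ)⁻¹ * (s - r) : ℝ) : EReal) from (EReal.coe_sub _ _).symm,
      show (Cr : EReal) - (s : EReal) = ((Cr - s : ℝ) : EReal) from (EReal.coe_sub _ _).symm,
      st5_e_coe, st5_e_coe, st5_e_coe]
    have e1 : (((n : ℕ) : ℝ≥0∞))⁻¹ = ENNReal.ofReal ((n:ℝ)⁻¹) := by
      rw [ENNReal.ofReal_inv_of_pos hn, ENNReal.ofReal_natCast]
    have hn1 : (1:ℝ) ≤ (n:ℝ) := by exact_mod_cast n.one_le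
    have hinv1 : (n:ℝ)⁻¹ ≤ 1 := by
      nlinarith [mul_inv_cancel₀ (ne_of_gt hn), inv_pos.2 hn, hn1]
    have e2 : (1 : ℝ≥0∞) - (((n : ℕ) : ℝ≥0∞))⁻¹ = ENNReal.ofReal (1 - (n:ℝ)⁻¹) := by
      rw [ENNReal.ofReal_sub _ (inv_nonneg.2 hn.le), ENNReal.ofReal_one, e1]
    rw [e2, e1, ← ENNReal.ofReal_mul (p := (n:ℝ)⁻¹) (inv_nonneg.2 hn.le),
      ← ENNReal.ofReal_mul (p := 1 - (n:ℝ)⁻¹) (by linarith),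
      ← ENNReal.ofReal_add (p := (n:ℝ)⁻¹ * (Cr - s)) (q := (1 - (n:ℝ)⁻¹) * (Cr - r))
        (mul_nonneg (inv_nonneg.2 hn.le) (by linarith)) (mul_nonneg (by linarith) (by linarith))]
    congr 1
    field_simp
    ring

lemma st5_antitone {E : Type*} [AddCommGroup E] [Module ℝ E] {f : E → EReal} {Cr : ℝ}
    (hconc : ∀ x y : E, ∀ a b : ℝ, 0 ≤ a → 0 ≤ b → a + b = 1 →
      (a : EReal) * f x + (b : EReal) * f y ≤ f (a • x + b • y))
    (hbd : ∀ z, f z ≤ (Cr : EReal)) {h₀ h : E} {r : ℝ} (hr : f h₀ = (r : EReal)) :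
    Antitone fun n : ℕ+ => ((n : ℝ)⁻¹ : EReal) * (f (h₀ + (n : ℝ) • h) - f h₀) := by
  intro a b hab
  simp only
  have ha : (0:ℝ) < (a:ℝ) := st5_pnat_pos a
  have hb : (0:ℝ) < (b:ℝ) := st5_pnat_pos b
  have habR : (a:ℝ) ≤ (b:ℝ) := by exact_mod_cast hab
  rw [hr]
  rw [show (((b : ℝ) : EReal))⁻¹ = (((b:ℝ)⁻¹ : ℝ) : EReal) from (EReal.coe_inv _).symm,
    show (((a : ℝ) : EReal))⁻¹ = (((a:ℝ)⁻¹ : ℝ) : EReal) from (EReal.coe_inv _).symm]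
  have hvle := hbd (h₀ + (b : ℝ) • h)
  have hconc' := hconc (h₀ + (b:ℝ) • h) h₀
  generalize hv : f (h₀ + (b : ℝ) • h) = v at hvle hconc' ⊢
  induction v using EReal.rec with
  | top => exact absurd hvle (by simp [lt_top_iff_ne_top])
  | bot =>
    rw [EReal.bot_sub, EReal.coe_mul_bot_of_pos (by exact_mod_cast inv_pos.2 hb)]
    exact bot_le
  | coe s =>
    have hpoint : ((a:ℝ)/(b:ℝ)) • (h₀ + (b:ℝ) • h) + (1 - (a:ℝ)/(b:ℝ)) • h₀
        = h₀ + (a:ℝ) • h := by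
      rw [smul_add, smul_smul, div_mul_cancel₀ _ (ne_of_gt hb)]
      module
    have hcomb := hconc' ((a:ℝ)/(b:ℝ)) (1 - (a:ℝ)/(b:ℝ))
      (by positivity) (by rw [sub_nonneg]; exact div_le_one_of_le₀ habR hb.le) (by ring)
    rw [hpoint, hr] at hcomb
    have hcomb' : ((((a:ℝ)/(b:ℝ)) * s + (1 - (a:ℝ)/(b:ℝ)) * r : ℝ) : EReal)
        ≤ f (h₀ + (a:ℝ) • h) := by
      rw [EReal.coe_add, EReal.coe_mul, EReal.coe_mul]; exact hcomb
    have hune_bot : f (h₀ + (a:ℝ) • h) ≠ ⊥ :=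
      fun hbot => by rw [hbot] at hcomb'; exact absurd (le_bot_iff.1 hcomb') (EReal.coe_ne_bot _)
    have hune_top : f (h₀ + (a:ℝ) • h) ≠ ⊤ :=
      ne_top_of_le_ne_top (EReal.coe_ne_top _) (hbd _)
    set t := (f (h₀ + (a:ℝ) • h)).toReal with ht
    rw [← EReal.coe_toReal hune_top hune_bot] at hcomb' ⊢
    rw [← ht] at hcomb' ⊢
    have hts : ((a:ℝ)/(b:ℝ)) * s + (1 - (a:ℝ)/(b:ℝ)) * r ≤ t := EReal.coe_le_coe_iff.1 hcomb'
    have hkey : (a:ℝ) * s + ((b:ℝ) - (a:ℝ)) * r ≤ (b:ℝ) * t := by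
      have h2 := mul_le_mul_of_nonneg_left hts hb.le
      rw [mul_add, ← mul_assoc, mul_div_cancel₀ _ (ne_of_gt hb)] at h2
      have h3 : (b:ℝ) * ((1 - (a:ℝ)/(b:ℝ)) * r) = ((b:ℝ) - (a:ℝ)) * r := by
        field_simp
        try ring
      linarith
    rw [← EReal.coe_sub, ← EReal.coe_mul, ← EReal.coe_sub, ← EReal.coe_mul]
    rw [EReal.coe_le_coe_iff]
    rw [inv_mul_eq_div, inv_mul_eq_div, div_le_div_iff₀ hb ha]
    nlinarith

lemma st5_P2 (b : ℝ) (hb : 0 ≤ b) (q : ℕ+ → EReal)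
    (hq : ∀ n : ℕ+, q n ≤ (((n : ℝ)⁻¹ * b : ℝ) : EReal)) :
    (⨅ n, q n) ≤ 0 ∧
      erealToENNReal ((0 : EReal) - ⨅ n, q n) + ENNReal.ofReal b
        = ⨆ n, erealToENNReal ((b : EReal) - q n) := by
  have hq' : ∀ n : ℕ+, q n ≤ (b : EReal) := fun n =>
    (hq n).trans (EReal.coe_le_coe_iff.2 (by
      have hn := st5_pnat_pos n
      have hn1 : (1:ℝ) ≤ (n:ℝ) := by exact_mod_cast n.one_le
      nlinarith [mul_inv_cancel₀ (ne_of_gt hn), inv_pos.2 hn, hn1]))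
  have hinf0 : (⨅ n, q n) ≤ 0 := by
    by_contra hcon
    push_neg at hcon
    have hne_top : (⨅ n, q n) ≠ ⊤ :=
      ne_top_of_le_ne_top (EReal.coe_ne_top b) ((iInf_le q 1).trans (hq' 1))
    have hne_bot : (⨅ n, q n) ≠ ⊥ := ne_of_gt (lt_of_le_of_lt (bot_le : (⊥:EReal) ≤ 0) hcon)
    set t := (⨅ n, q n).toReal with htdef
    have htpos : 0 < t := by
      have := hcon
      rw [← EReal.coe_toReal hne_top hne_bot] at this
      exact_mod_cast this
    obtain ⟨m, hm⟩ := exists_nat_gt (b / t)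
    have hmpos : 0 < m + 1 := Nat.succ_pos m
    set n : ℕ+ := ⟨m + 1, hmpos⟩ with hn
    have hnR : (0:ℝ) < (n:ℝ) := st5_pnat_pos n
    have hlt : (n:ℝ)⁻¹ * b < t := by
      rw [inv_mul_eq_div, div_lt_iff₀ hnR]
      have hbn : b / t < (n:ℝ) := lt_of_lt_of_le hm (by exact_mod_cast Nat.le_succ m)
      calc b = t * (b / t) := by field_simp
        _ < t * (n:ℝ) := by exact mul_lt_mul_of_pos_left hbn htpos
    have : (⨅ k, q k) ≤ (((n:ℝ)⁻¹ * b : ℝ) : EReal) := (iInf_le q n).trans (hq n)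
    rw [← EReal.coe_toReal hne_top hne_bot, EReal.coe_le_coe_iff] at this
    linarith
  refine ⟨hinf0, ?_⟩
  have hstep : erealToENNReal ((0 : EReal) - ⨅ n, q n) + ENNReal.ofReal b
      = erealToENNReal ((b : EReal) - ⨅ n, q n) := by
    have hne_top : (⨅ n, q n) ≠ ⊤ := ne_top_of_le_ne_top (by simp) hinf0
    generalize hm : (⨅ n, q n) = m at hinf0 hne_top ⊢
    induction m using EReal.rec with
    | top => exact absurd rfl hne_top
    | bot =>
      rw [show (0:EReal) - ⊥ = ⊤ by rw [← EReal.coe_zero, EReal.coe_sub_bot],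
        EReal.coe_sub_bot, st5_e_top, top_add]
    | coe t =>
      have ht0 : t ≤ 0 := by exact_mod_cast hinf0
      rw [show (0:EReal) - (t:EReal) = ((-t : ℝ) : EReal) by
          rw [← EReal.coe_zero, ← EReal.coe_sub]; norm_num,
        show (b:EReal) - (t:EReal) = ((b - t : ℝ) : EReal) from (EReal.coe_sub _ _).symm,
        st5_e_coe, st5_e_coe, ← ENNReal.ofReal_add (by linarith) hb]
      congr 1
      ring
  rw [hstep, st5_coe_sub_iInf b q, st5_e_iSup _ (fun n => by
    calc (0:EReal) = ((b - b : ℝ) : EReal) := by norm_num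
      _ ≤ (b : EReal) - q n := by
          rw [EReal.coe_sub]; exact EReal.sub_le_sub le_rfl (hq' n))]

lemma st5_coe_ennreal_toReal (w : ℝ≥0∞) (hw : w ≠ ⊤) :
    (w : EReal) = ((w.toReal : ℝ) : EReal) := by
  have hwt : (w : EReal) ≠ ⊤ := by simp [EReal.coe_ennreal_eq_top_iff, hw]
  have hwb : (w : EReal) ≠ ⊥ := by simp
  rw [← EReal.toReal_coe_ennreal (x := w)]
  exact (EReal.coe_toReal hwt hwb).symm

/-- for `Φ(h) := E^P[Ψ(h)]` with `Ψ(ω,·)` concave, bounded above by `C`,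
jointly measurable and `E^P[Ψ(h°)] > -∞`, one has `Φ^∞(h) = E^P[Ψ^∞(h)]`
(horizon functions taken with base point `h°`; `Ψ^∞ ≤ 0` is integrated with bound `0`). -/
theorem stmt5 {Ω : Type*} [MeasurableSpace Ω] (P : Measure Ω) [IsProbabilityMeasure P]
    {d : ℕ} (Ψ : Ω → (Fin d → ℝ) → EReal) (C : ℝ)
    (hmeas : Measurable (Function.uncurry Ψ))
    (hconc : ∀ ω, IsConcaveE (Ψ ω))
    (hbd : ∀ ω z, Ψ ω z ≤ (C : EReal))
    (h₀ : Fin d → ℝ) (hh₀ : expE P C (fun ω => Ψ ω h₀) ≠ ⊥) :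
    ∀ h : Fin d → ℝ,
      hor (fun z => expE P C (fun ω => Ψ ω z)) h₀ h
        = expE P 0 (fun ω => hor (Ψ ω) h₀ h) := by
  intro h
  have measΨ : ∀ z : Fin d → ℝ, Measurable fun ω => Ψ ω z := fun z =>
    hmeas.comp (measurable_id.prodMk measurable_const)
  have hanti0 : Antitone fun x : EReal => erealToENNReal ((C : EReal) - x) :=
    fun x y hxy => st5_e_mono (EReal.sub_le_sub le_rfl hxy)
  have msub : Measurable fun x : EReal => erealToENNReal ((C : EReal) - x) :=
    hanti0.measurable
  have measInt : ∀ z, Measurable fun ω => erealToENNReal ((C : EReal) - Ψ ω z) :=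
    fun z => msub.comp (measΨ z)
  set F : (Fin d → ℝ) → ℝ≥0∞ :=
    fun z => ∫⁻ ω, erealToENNReal ((C : EReal) - Ψ ω z) ∂P with hFdef
  have hexp : ∀ z, expE P C (fun ω => Ψ ω z) = (C : EReal) - ((F z : ℝ≥0∞) : EReal) :=
    fun z => rfl
  have hF₀ : F h₀ ≠ ⊤ := by
    intro htop
    apply hh₀
    rw [hexp h₀, htop, EReal.coe_ennreal_top, EReal.sub_top]
  have hΦ₀ : expE P C (fun ω => Ψ ω h₀) = ((C - (F h₀).toReal : ℝ) : EReal) := by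
    rw [hexp h₀, st5_coe_ennreal_toReal _ hF₀, ← EReal.coe_sub]
  -- the approximating sequence
  set X : ℕ+ → Ω → ℝ≥0∞ := fun n ω =>
    (((n : ℕ) : ℝ≥0∞))⁻¹ * erealToENNReal ((C : EReal) - Ψ ω (h₀ + (n : ℝ) • h))
      + (1 - ((n : ℕ) : ℝ≥0∞)⁻¹) * erealToENNReal ((C : EReal) - Ψ ω h₀) with hXdef
  have hXmeas : ∀ n, Measurable (X n) := fun n =>
    ((measInt _).const_mul _).add ((measInt h₀).const_mul _)
  have hXint : ∀ n : ℕ+, ∫⁻ ω, X n ω ∂P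
      = (((n : ℕ) : ℝ≥0∞))⁻¹ * F (h₀ + (n : ℝ) • h)
        + (1 - ((n : ℕ) : ℝ≥0∞)⁻¹) * F h₀ := by
    intro n
    rw [hXdef]
    rw [lintegral_add_left ((measInt _).const_mul _),
      lintegral_const_mul _ (measInt _), lintegral_const_mul _ (measInt h₀)]
  -- a.e. facts
  have haefin : ∀ᵐ ω ∂P, erealToENNReal ((C : EReal) - Ψ ω h₀) ≠ ⊤ := by
    filter_upwards [ae_lt_top (measInt h₀) hF₀] with ω hω using hω.ne
  have haer : ∀ᵐ ω ∂P, ∃ r : ℝ, Ψ ω h₀ = (r : EReal) := by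
    filter_upwards [haefin] with ω hω
    have h1 : Ψ ω h₀ ≠ ⊥ := by
      intro hbot
      apply hω
      rw [hbot, EReal.coe_sub_bot, st5_e_top]
    have h2 : Ψ ω h₀ ≠ ⊤ := ne_top_of_le_ne_top (EReal.coe_ne_top C) (hbd ω h₀)
    exact ⟨(Ψ ω h₀).toReal, (EReal.coe_toReal h2 h1).symm⟩
  have key : ∀ᵐ ω ∂P,
      (Monotone fun k : ℕ => X k.succPNat ω) ∧
      (⨆ n : ℕ+, X n ω) = erealToENNReal ((0 : EReal) - hor (Ψ ω) h₀ h)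
          + erealToENNReal ((C : EReal) - Ψ ω h₀) ∧
      erealToENNReal ((C : EReal) - Ψ ω h₀) ≠ ⊤ := by
    filter_upwards [haer] with ω hω
    obtain ⟨r, hrω⟩ := hω
    have hrC : r ≤ C := by
      have hb := hbd ω h₀
      rw [hrω] at hb
      exact_mod_cast hb
    have hXe : ∀ n : ℕ+, X n ω = erealToENNReal ((C : EReal) - (r : EReal)
        - ((n : ℝ)⁻¹ : EReal) * (Ψ ω (h₀ + (n : ℝ) • h) - (r : EReal))) := by
      intro n
      simp only [hXdef]
      rw [hrω]
      exact (st5_P1 C r hrC _ (hbd ω _) n).symm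
    have hanti : Antitone fun n : ℕ+ =>
        ((n : ℝ)⁻¹ : EReal) * (Ψ ω (h₀ + (n : ℝ) • h) - (r : EReal)) := by
      have := st5_antitone (hconc ω) (hbd ω) (h₀ := h₀) (h := h) hrω
      simpa only [hrω] using this
    have hqbound : ∀ n : ℕ+,
        ((n : ℝ)⁻¹ : EReal) * (Ψ ω (h₀ + (n : ℝ) • h) - (r : EReal))
          ≤ (((n : ℝ)⁻¹ * (C - r) : ℝ) : EReal) := by
      intro n
      have hinv : (0 : EReal) ≤ ((n : ℝ)⁻¹ : EReal) := by
        rw [← EReal.coe_inv]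
        exact EReal.coe_nonneg.2 (inv_nonneg.2 (st5_pnat_pos n).le)
      have h1 : Ψ ω (h₀ + (n : ℝ) • h) - (r : EReal) ≤ (C : EReal) - (r : EReal) :=
        EReal.sub_le_sub (hbd ω _) le_rfl
      calc ((n : ℝ)⁻¹ : EReal) * (Ψ ω (h₀ + (n : ℝ) • h) - (r : EReal))
          ≤ ((n : ℝ)⁻¹ : EReal) * ((C : EReal) - (r : EReal)) :=
            mul_le_mul_of_nonneg_left h1 hinv
        _ = (((n : ℝ)⁻¹ * (C - r) : ℝ) : EReal) := by
            rw [← EReal.coe_sub, ← EReal.coe_inv, ← EReal.coe_mul]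
    have hP2 := st5_P2 (C - r) (by linarith)
      (fun n : ℕ+ => ((n : ℝ)⁻¹ : EReal) * (Ψ ω (h₀ + (n : ℝ) • h) - (r : EReal))) hqbound
    have hhor : hor (Ψ ω) h₀ h
        = ⨅ n : ℕ+, ((n : ℝ)⁻¹ : EReal) * (Ψ ω (h₀ + (n : ℝ) • h) - (r : EReal)) := by
      unfold hor
      simp only [hrω]
    have heB : erealToENNReal ((C : EReal) - Ψ ω h₀) = ENNReal.ofReal (C - r) := by
      rw [hrω, ← EReal.coe_sub, st5_e_coe]
    refine ⟨?_, ?_, ?_⟩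
    · intro k l hkl
      show X k.succPNat ω ≤ X l.succPNat ω
      rw [hXe, hXe]
      exact st5_e_mono (EReal.sub_le_sub le_rfl (hanti (Nat.succPNat_le_succPNat.2 hkl)))
    · have hsup : (⨆ n : ℕ+, X n ω) = ⨆ n : ℕ+, erealToENNReal
          (((C - r : ℝ) : EReal) - ((n : ℝ)⁻¹ : EReal) * (Ψ ω (h₀ + (n : ℝ) • h) - (r : EReal))) := by
        refine iSup_congr fun n => ?_
        rw [hXe n, EReal.coe_sub]
      rw [hsup, ← hP2.2, hhor, heB]
    · rw [heB]
      exact ENNReal.ofReal_ne_top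
  -- swap integral and supremum
  have hsurj : Function.Surjective Nat.succPNat := fun n => ⟨n.natPred, n.succPNat_natPred⟩
  set S : ℝ≥0∞ := ⨆ n : ℕ+, ((((n : ℕ) : ℝ≥0∞))⁻¹ * F (h₀ + (n : ℝ) • h)
      + (1 - ((n : ℕ) : ℝ≥0∞)⁻¹) * F h₀) with hSdef
  have hsupX : ∫⁻ ω, ⨆ n : ℕ+, X n ω ∂P = S := by
    calc ∫⁻ ω, ⨆ n : ℕ+, X n ω ∂P
        = ∫⁻ ω, ⨆ k : ℕ, X k.succPNat ω ∂P :=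
          lintegral_congr fun ω => (hsurj.iSup_comp fun n => X n ω).symm
      _ = ⨆ k : ℕ, ∫⁻ ω, X k.succPNat ω ∂P := by
          refine lintegral_iSup' (fun k => (hXmeas _).aemeasurable) ?_
          filter_upwards [key] with ω hk using hk.1
      _ = ⨆ n : ℕ+, ∫⁻ ω, X n ω ∂P := hsurj.iSup_comp fun n => ∫⁻ ω, X n ω ∂P
      _ = S := by rw [hSdef]; exact iSup_congr hXint
  -- value of the RHS integral
  have hRHSint : ∫⁻ ω, erealToENNReal ((0 : EReal) - hor (Ψ ω) h₀ h) ∂P = S - F h₀ := by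
    have hae2 : ∀ᵐ ω ∂P, erealToENNReal ((0 : EReal) - hor (Ψ ω) h₀ h)
        = (⨆ n : ℕ+, X n ω) - erealToENNReal ((C : EReal) - Ψ ω h₀) := by
      filter_upwards [key] with ω hk
      obtain ⟨hmono, hsum, hfin⟩ := hk
      rw [hsum, ENNReal.add_sub_cancel_right hfin]
    rw [lintegral_congr_ae hae2]
    rw [lintegral_sub (measInt h₀) hF₀ ?_]
    · rw [hsupX]
    · filter_upwards [key] with ω hk
      rw [hk.2.1]
      exact le_add_self
  -- the Φ side
  have hΦle : ∀ z, expE P C (fun ω => Ψ ω z) ≤ (C : EReal) := by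
    intro z
    rw [hexp z]
    rcases eq_or_ne (F z) ⊤ with hz | hz
    · rw [hz, EReal.coe_ennreal_top, EReal.sub_top]
      exact bot_le
    · rw [st5_coe_ennreal_toReal _ hz, ← EReal.coe_sub]
      exact EReal.coe_le_coe_iff.2 (by linarith [ENNReal.toReal_nonneg (a := F z)])
  set r₀ : ℝ := C - (F h₀).toReal with hr₀def
  have hr₀C : r₀ ≤ C := by
    rw [hr₀def]
    linarith [ENNReal.toReal_nonneg (a := F h₀)]
  have hcoeb : (((F h₀).toReal : ℝ) : EReal) = (C : EReal) - (r₀ : EReal) := by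
    rw [← EReal.coe_sub, hr₀def]
    norm_num
  have hG1 : ∀ n : ℕ+, erealToENNReal ((C : EReal) - (r₀ : EReal)
      - ((n : ℝ)⁻¹ : EReal) * (expE P C (fun ω => Ψ ω (h₀ + (n : ℝ) • h))
          - expE P C (fun ω => Ψ ω h₀)))
      = (((n : ℕ) : ℝ≥0∞))⁻¹ * F (h₀ + (n : ℝ) • h) + (1 - ((n : ℕ) : ℝ≥0∞)⁻¹) * F h₀ := by
    intro n
    rw [hΦ₀]
    rw [st5_P1 C r₀ hr₀C _ (hΦle _) n]
    congr 1
    · congr 1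
      rw [hexp, st5_coe_sub_sub_cancel, st5_e_coe_ennreal]
    · congr 1
      rw [← hcoeb, st5_e_coe, ENNReal.ofReal_toReal hF₀]
  have hqG : ∀ n : ℕ+, ((n : ℝ)⁻¹ : EReal) * (expE P C (fun ω => Ψ ω (h₀ + (n : ℝ) • h))
      - expE P C (fun ω => Ψ ω h₀)) ≤ (((n : ℝ)⁻¹ * (F h₀).toReal : ℝ) : EReal) := by
    intro n
    have hinv : (0 : EReal) ≤ ((n : ℝ)⁻¹ : EReal) := by
      rw [← EReal.coe_inv]
      exact EReal.coe_nonneg.2 (inv_nonneg.2 (st5_pnat_pos n).le)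
    have h1 : expE P C (fun ω => Ψ ω (h₀ + (n : ℝ) • h)) - expE P C (fun ω => Ψ ω h₀)
        ≤ (C : EReal) - (r₀ : EReal) := by
      rw [hΦ₀]
      exact EReal.sub_le_sub (hΦle _) le_rfl
    calc ((n : ℝ)⁻¹ : EReal) * (expE P C (fun ω => Ψ ω (h₀ + (n : ℝ) • h))
        - expE P C (fun ω => Ψ ω h₀))
        ≤ ((n : ℝ)⁻¹ : EReal) * ((C : EReal) - (r₀ : EReal)) :=
          mul_le_mul_of_nonneg_left h1 hinv
      _ = (((n : ℝ)⁻¹ * (F h₀).toReal : ℝ) : EReal) := by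
          rw [← hcoeb, ← EReal.coe_inv, ← EReal.coe_mul]
  have hP2G := st5_P2 ((F h₀).toReal) ENNReal.toReal_nonneg
    (fun n : ℕ+ => ((n : ℝ)⁻¹ : EReal) * (expE P C (fun ω => Ψ ω (h₀ + (n : ℝ) • h))
      - expE P C (fun ω => Ψ ω h₀))) hqG
  have hQ0 := hP2G.1
  have hQeq : erealToENNReal ((0 : EReal) - ⨅ n : ℕ+,
      ((n : ℝ)⁻¹ : EReal) * (expE P C (fun ω => Ψ ω (h₀ + (n : ℝ) • h))
        - expE P C (fun ω => Ψ ω h₀))) = S - F h₀ := by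
    have h2 := hP2G.2
    have h3 : (⨆ n : ℕ+, erealToENNReal ((((F h₀).toReal : ℝ) : EReal)
        - ((n : ℝ)⁻¹ : EReal) * (expE P C (fun ω => Ψ ω (h₀ + (n : ℝ) • h))
          - expE P C (fun ω => Ψ ω h₀)))) = S := by
      rw [hSdef]
      refine iSup_congr fun n => ?_
      rw [hcoeb]
      exact hG1 n
    rw [h3, ENNReal.ofReal_toReal hF₀] at h2
    rw [← h2, ENNReal.add_sub_cancel_right hF₀]
  -- conclusion
  have hLHS : hor (fun z => expE P C (fun ω => Ψ ω z)) h₀ h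
      = ⨅ n : ℕ+, ((n : ℝ)⁻¹ : EReal) * (expE P C (fun ω => Ψ ω (h₀ + (n : ℝ) • h))
        - expE P C (fun ω => Ψ ω h₀)) := rfl
  have hRHS : expE P 0 (fun ω => hor (Ψ ω) h₀ h)
      = (0 : EReal) - ((S - F h₀ : ℝ≥0∞) : EReal) := by
    unfold expE
    simp only [EReal.coe_zero]
    rw [hRHSint]
  rw [hLHS, hRHS, ← hQeq]
  exact (st5_P3 _ hQ0).symm
end

section
/- Let f : ℝ^n → ℝ ∪ {-∞} be concave, upper-semicontinuous and proper, and suppose {z ∈ ℝ^n : f^∞(z) ≥ 0} is a linear subspace, and sup_x f(x) > -∞. Then there exists x̂ ∈ ℝ^n with f(x̂) = sup_{x ∈ ℝ^n} f(x), i.e. the supremum of f over ℝ^n is attained. -/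
open MeasureTheory Filter
open scoped ENNReal Topology

lemma ereal_sub_nonneg (a : ℝ) (t : EReal) : 0 ≤ t - (a : EReal) ↔ (a : EReal) ≤ t := by
  induction t using EReal.rec with
  | bot => simp [EReal.bot_sub]
  | coe b => simp [← EReal.coe_sub, EReal.coe_nonneg, EReal.coe_le_coe_iff, sub_nonneg]
  | top => simp [EReal.top_sub_coe]

lemma ereal_nonneg_of_mul_nonneg {c : ℝ} (hc : 0 < c) {t : EReal}
    (h : 0 ≤ (c : EReal) * t) : 0 ≤ t := by
  induction t using EReal.rec with
  | bot => rw [EReal.mul_bot_of_pos (EReal.coe_pos.2 hc)] at h; simp at h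
  | coe b =>
    rw [← EReal.coe_mul] at h
    have hb := EReal.coe_nonneg.1 h
    exact EReal.coe_nonneg.2 (by nlinarith)
  | top => simp

lemma hor_nonneg_iff {E : Type*} [AddCommGroup E] [Module ℝ E] {f : E → EReal} {x₀ : E}
    {a : ℝ} (ha : f x₀ = (a : EReal)) (z : E) :
    0 ≤ hor f x₀ z ↔ ∀ m : ℕ+, f x₀ ≤ f (x₀ + (m : ℝ) • z) := by
  rw [hor, le_iInf_iff]
  refine forall_congr' fun m => ?_
  have hmpos : (0 : EReal) < ((m : ℝ)⁻¹ : ℝ) := EReal.coe_pos.2 (by positivity)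
  rw [ha]
  constructor
  · intro h
    exact (ereal_sub_nonneg a _).1 (ereal_nonneg_of_mul_nonneg (by positivity) h)
  · intro h
    exact mul_nonneg hmpos.le ((ereal_sub_nonneg a _).2 h)

lemma usc_limit {E : Type*} [TopologicalSpace E] {f : E → EReal} (husc : UpperSemicontinuous f)
    {z : ℕ → E} {x : E} (hz : Filter.Tendsto z Filter.atTop (𝓝 x)) {c : ℕ → EReal} {c₀ : EReal}
    (hc : Filter.Tendsto c Filter.atTop (𝓝 c₀)) (h : ∀ᶠ k in Filter.atTop, c k ≤ f (z k)) :
    c₀ ≤ f x := by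
  by_contra hlt
  push_neg at hlt
  obtain ⟨y, hy1, hy2⟩ := exists_between hlt
  have h1 : ∀ᶠ k in Filter.atTop, f (z k) < y := hz.eventually (husc x y hy1)
  have h2 : ∀ᶠ k in Filter.atTop, y < c k := hc.eventually_const_lt hy2
  obtain ⟨k, hk0, hk1, hk2⟩ := (h.and (h1.and h2)).exists
  exact absurd (hk0.trans_lt hk1) (not_lt.2 hk2.le)

lemma chord {E : Type*} [AddCommGroup E] [Module ℝ E] {f : E → EReal} (hconc : IsConcaveE f)
    (x y : E) {t : ℝ} (h0 : 0 ≤ t) (h1 : t ≤ 1) :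
    ((1 - t : ℝ) : EReal) * f x + (t : EReal) * f y ≤ f (x + t • (y - x)) := by
  have := hconc x y (1 - t) t (by linarith) h0 (by ring)
  have he : (1 - t) • x + t • y = x + t • (y - x) := by
    rw [smul_sub, sub_smul, one_smul]; abel
  rwa [he] at this

lemma move_lemma {E : Type*} [NormedAddCommGroup E] [NormedSpace ℝ E] {f : E → EReal}
    (hconc : IsConcaveE f) (husc : UpperSemicontinuous f)
    {x₀ : E} {a : ℝ} (ha : f x₀ = (a : EReal)) {z : E}
    (hz : ∀ m : ℕ+, f x₀ ≤ f (x₀ + (m : ℝ) • z))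
    {x : E} {b : ℝ} (hb : f x = (b : EReal)) : f x ≤ f (x + z) := by
  set lam : ℕ → ℝ := fun k => (1 : ℝ) / (k + 1) with hlam
  have hlam_pos : ∀ k : ℕ, 0 < lam k := fun k => by positivity
  have hlam_le : ∀ k : ℕ, lam k ≤ 1 := fun k => by
    rw [hlam]; rw [div_le_one (by positivity)]; linarith [Nat.cast_nonneg (α := ℝ) k]
  have hlam0 : Filter.Tendsto lam Filter.atTop (𝓝 0) := tendsto_one_div_add_atTop_nhds_zero_nat
  set p : ℕ → E := fun k => x + lam k • (x₀ - x) + z with hp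
  have hptend : Filter.Tendsto p Filter.atTop (𝓝 (x + z)) := by
    have h1 : Filter.Tendsto (fun k => lam k • (x₀ - x)) Filter.atTop (𝓝 (0 : E)) := by
      simpa using hlam0.smul_const (x₀ - x)
    have := ((tendsto_const_nhds (x := x) (f := Filter.atTop)).add h1).add
      (tendsto_const_nhds (x := z) (f := Filter.atTop))
    simpa using this
  have key : ∀ k : ℕ, (((1 - lam k) * b + lam k * a : ℝ) : EReal) ≤ f (p k) := by
    intro k
    set m : ℕ+ := ⟨k + 1, k.succ_pos⟩ with hm
    have hmn : (m : ℕ) = k + 1 := rfl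
    have hmc : ((m : ℕ) : ℝ) = (k : ℝ) + 1 := by rw [hmn]; push_cast; ring
    have hy : f x₀ ≤ f (x₀ + ((m : ℕ) : ℝ) • z) := hz m
    have hcomb := hconc x (x₀ + ((m : ℕ) : ℝ) • z) (1 - lam k) (lam k)
      (by linarith [hlam_le k]) (hlam_pos k).le (by ring)
    have hpt : (1 - lam k) • x + lam k • (x₀ + ((m : ℕ) : ℝ) • z) = p k := by
      have hk : lam k * ((m : ℕ) : ℝ) = 1 := by
        rw [hmc, hlam]
        field_simp
      rw [smul_add, smul_smul, hk, one_smul, hp]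
      module
    rw [hpt] at hcomb
    refine le_trans ?_ hcomb
    rw [EReal.coe_add, EReal.coe_mul, EReal.coe_mul, hb]
    refine add_le_add_right ?_ _
    refine mul_le_mul_of_nonneg_left ?_ (EReal.coe_nonneg.2 (hlam_pos k).le)
    rw [← ha]; exact hy
  have hctend : Filter.Tendsto (fun k => (((1 - lam k) * b + lam k * a : ℝ) : EReal))
      Filter.atTop (𝓝 (b : EReal)) := by
    rw [EReal.tendsto_coe]
    have : Filter.Tendsto (fun k => (1 - lam k) * b + lam k * a) Filter.atTop
        (𝓝 ((1 - 0) * b + 0 * a)) :=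
      (((tendsto_const_nhds.sub hlam0).mul tendsto_const_nhds).add
        (hlam0.mul tendsto_const_nhds))
    simpa using this
  rw [hb]
  exact usc_limit husc hptend hctend (Filter.Eventually.of_forall key)

/-- if `f : ℝ^n → ℝ ∪ {-∞}` is concave, usc and proper,
`{z | f^∞(z) ≥ 0}` is a linear subspace and `sup f > -∞`, then the supremum of `f`
over `ℝ^n` is attained. -/
theorem stmt9 {n : ℕ} (f : (Fin n → ℝ) → EReal)
    (hconc : IsConcaveE f) (husc : UpperSemicontinuous f) (hne_top : ∀ z, f z ≠ ⊤)
    (x₀ : Fin n → ℝ) (hx₀ : f x₀ ≠ ⊥)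
    (hlin : ∃ S : Submodule ℝ (Fin n → ℝ),
      (S : Set (Fin n → ℝ)) = {z | 0 ≤ hor f x₀ z})
    (hsup : (⨆ x, f x) ≠ ⊥) :
    ∃ xhat, f xhat = ⨆ x, f x := by
  classical
  obtain ⟨S, hS⟩ := hlin
  have hmemS : ∀ z, z ∈ S ↔ 0 ≤ hor f x₀ z := fun z => Set.ext_iff.1 hS z
  set a : ℝ := (f x₀).toReal with hadef
  have ha : f x₀ = (a : EReal) := (EReal.coe_toReal (hne_top x₀) hx₀).symm
  have hmove : ∀ z ∈ S, ∀ x : Fin n → ℝ, f x ≠ ⊥ → f x ≤ f (x + z) := by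
    intro z hzS x hxb
    have hb : f x = ((f x).toReal : EReal) := (EReal.coe_toReal (hne_top x) hxb).symm
    exact move_lemma hconc husc ha ((hor_nonneg_iff ha z).1 ((hmemS z).1 hzS)) hb
  obtain ⟨T, hT⟩ := Submodule.exists_isCompl S
  have hTclosed : IsClosed (T : Set (Fin n → ℝ)) := T.closed_of_finiteDimensional
  have hproj : ∀ x : Fin n → ℝ, f x ≠ ⊥ → ∃ t, t ∈ (T : Set (Fin n → ℝ)) ∧ f x ≤ f t := by
    intro x hxb
    have hx : x ∈ S ⊔ T := by rw [codisjoint_iff.1 hT.codisjoint]; trivial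
    obtain ⟨s, hs, t, ht, hst⟩ := Submodule.mem_sup.1 hx
    refine ⟨t, ht, ?_⟩
    have het : t = x + (-s) := by rw [← hst]; abel
    rw [het]
    exact hmove (-s) (neg_mem hs) x hxb
  have hclosed : ∀ c : EReal, IsClosed {x : Fin n → ℝ | c ≤ f x} := by
    intro c
    rw [← isOpen_compl_iff, isOpen_iff_mem_nhds]
    intro x hx
    simp only [Set.mem_compl_iff, Set.mem_setOf_eq, not_le] at hx
    filter_upwards [husc x c hx] with y hy
    simp only [Set.mem_compl_iff, Set.mem_setOf_eq, not_le]
    exact hy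
  set C : Set (Fin n → ℝ) := (T : Set _) ∩ {x | (a : EReal) ≤ f x} with hC
  have hCclosed : IsClosed C := hTclosed.inter (hclosed a)
  have hCbounded : Bornology.IsBounded C := by
    by_contra hub
    rw [isBounded_iff_forall_norm_le] at hub
    push_neg at hub
    choose xx hxxC hxxn using fun k : ℕ => hub ((k : ℝ) + ‖x₀‖ + 1)
    set r : ℕ → ℝ := fun k => ‖xx k - x₀‖ with hr
    have hrk : ∀ k : ℕ, (k : ℝ) + 1 ≤ r k := by
      intro k
      have h1 := hxxn k
      have h2 : ‖xx k‖ - ‖x₀‖ ≤ ‖xx k - x₀‖ := norm_sub_norm_le _ _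
      rw [hr]
      linarith
    have hrpos : ∀ k, 0 < r k := fun k => lt_of_lt_of_le (by positivity) (hrk k)
    have hrtop : Filter.Tendsto r Filter.atTop Filter.atTop :=
      Filter.tendsto_atTop_mono (fun k => le_trans (by linarith) (hrk k))
        tendsto_natCast_atTop_atTop
    set v : ℕ → (Fin n → ℝ) := fun k => (r k)⁻¹ • (xx k - x₀) with hv
    have hvs : ∀ k, v k ∈ Metric.sphere (0 : Fin n → ℝ) 1 := by
      intro k
      rw [mem_sphere_zero_iff_norm, hv]
      simp only [norm_smul, Real.norm_eq_abs, abs_of_pos (inv_pos.2 (hrpos k))]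
      exact inv_mul_cancel₀ (hrpos k).ne'
    obtain ⟨d, hds, φ, hφmono, hφtend⟩ :=
      (isCompact_sphere (0 : Fin n → ℝ) 1).tendsto_subseq hvs
    have hrφtop : Filter.Tendsto (fun k => r (φ k)) Filter.atTop Filter.atTop :=
      hrtop.comp hφmono.tendsto_atTop
    have hdT : d ∈ (T : Set (Fin n → ℝ)) := by
      have hinv0 : Filter.Tendsto (fun k => (r (φ k))⁻¹) Filter.atTop (𝓝 0) :=
        tendsto_inv_atTop_zero.comp hrφtop
      have h0 : Filter.Tendsto (fun k => (r (φ k))⁻¹ • x₀) Filter.atTop (𝓝 (0 : Fin n → ℝ)) := by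
        simpa using hinv0.smul_const x₀
      have heq : (fun k => (r (φ k))⁻¹ • xx (φ k))
          = fun k => v (φ k) + (r (φ k))⁻¹ • x₀ := by
        funext k
        rw [hv]
        simp only [smul_sub]
        abel
      have hdiff : Filter.Tendsto (fun k => (r (φ k))⁻¹ • xx (φ k)) Filter.atTop (𝓝 d) := by
        rw [heq]
        simpa using hφtend.add h0
      exact hTclosed.mem_of_tendsto hdiff
        (Filter.Eventually.of_forall fun k => T.smul_mem _ (hxxC (φ k)).1)
    have hmono : ∀ m : ℕ+, f x₀ ≤ f (x₀ + ((m : ℕ) : ℝ) • d) := by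
      intro m
      have hqtend : Filter.Tendsto (fun k => x₀ + ((m : ℕ) : ℝ) • v (φ k)) Filter.atTop
          (𝓝 (x₀ + ((m : ℕ) : ℝ) • d)) :=
        tendsto_const_nhds.add (hφtend.const_smul _)
      rw [ha]
      refine usc_limit husc hqtend (tendsto_const_nhds (x := (a : EReal))) ?_
      filter_upwards [hrφtop.eventually_ge_atTop ((m : ℕ) : ℝ)] with k hk
      set t : ℝ := ((m : ℕ) : ℝ) / r (φ k) with htdef
      have hmpos : (0 : ℝ) < ((m : ℕ) : ℝ) := by exact_mod_cast m.pos
      have h0t : 0 < t := div_pos hmpos (hrpos (φ k))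
      have h1t : t ≤ 1 := (div_le_one (hrpos (φ k))).2 hk
      have hcomb := chord hconc x₀ (xx (φ k)) h0t.le h1t
      rw [ha] at hcomb
      have hpt : x₀ + t • (xx (φ k) - x₀) = x₀ + ((m : ℕ) : ℝ) • v (φ k) := by
        have hteq : t = ((m : ℕ) : ℝ) * (r (φ k))⁻¹ := div_eq_mul_inv _ _
        rw [hv, smul_smul, ← hteq]
      rw [hpt] at hcomb
      refine le_trans ?_ hcomb
      have hxk : (a : EReal) ≤ f (xx (φ k)) := (hxxC (φ k)).2
      calc (a : EReal) = (((1 - t) * a + t * a : ℝ) : EReal) := by rw [show ((1 - t) * a + t * a : ℝ) = a by ring]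
        _ = ((1 - t : ℝ) : EReal) * (a : EReal) + (t : EReal) * (a : EReal) := by
            rw [EReal.coe_add, EReal.coe_mul, EReal.coe_mul]
        _ ≤ ((1 - t : ℝ) : EReal) * (a : EReal) + (t : EReal) * f (xx (φ k)) :=
            add_le_add_right (mul_le_mul_of_nonneg_left hxk (EReal.coe_nonneg.2 h0t.le)) _
    have hdS : d ∈ S := (hmemS d).2 ((hor_nonneg_iff ha d).2 hmono)
    have hd0 : d = 0 := by
      have hdb : d ∈ S ⊓ T := ⟨hdS, hdT⟩
      rw [disjoint_iff.1 hT.disjoint] at hdb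
      exact (Submodule.mem_bot ℝ).1 hdb
    rw [mem_sphere_zero_iff_norm, hd0] at hds
    simp at hds
  have hCcompact : IsCompact C :=
    Metric.isCompact_of_isClosed_isBounded hCclosed hCbounded
  -- directed family of compact sets
  set ι := {y : Fin n → ℝ // (a : EReal) ≤ f y} with hι
  have hιne : Nonempty ι := ⟨⟨x₀, ha.ge⟩⟩
  set K : ι → Set (Fin n → ℝ) := fun y => (T : Set _) ∩ {x | f y.1 ≤ f x} with hK
  have hKsub : ∀ y, K y ⊆ C := fun y x hx => ⟨hx.1, le_trans y.2 hx.2⟩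
  have hKclosed : ∀ y, IsClosed (K y) := fun y => hTclosed.inter (hclosed _)
  have hKcompact : ∀ y, IsCompact (K y) := fun y =>
    hCcompact.of_isClosed_subset (hKclosed y) (hKsub y)
  have hKne : ∀ y, (K y).Nonempty := by
    intro y
    have hyb : f y.1 ≠ ⊥ := by
      intro h
      have := y.2.trans h.le
      simp at this
    obtain ⟨t, ht, hft⟩ := hproj y.1 hyb
    exact ⟨t, ht, hft⟩
  have hKdir : Directed (· ⊇ ·) K := by
    intro y y'
    rcases le_total (f y.1) (f y'.1) with h | h
    · exact ⟨y', fun x hx => ⟨hx.1, le_trans h hx.2⟩, fun x hx => hx⟩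
    · exact ⟨y, fun x hx => hx, fun x hx => ⟨hx.1, le_trans h hx.2⟩⟩
  obtain ⟨xhat, hxhat⟩ :=
    IsCompact.nonempty_iInter_of_directed_nonempty_isCompact_isClosed K hKdir hKne
      hKcompact hKclosed
  simp only [Set.mem_iInter] at hxhat
  refine ⟨xhat, le_antisymm (le_iSup f xhat) (iSup_le fun y => ?_)⟩
  by_cases h : (a : EReal) ≤ f y
  · exact (hxhat ⟨y, h⟩).2
  · exact le_trans (not_le.1 h).le (le_trans ha.ge (hxhat ⟨x₀, ha.ge⟩).2)
end

section
/- One-period robust maximizer existence: let Ω be a measurable space, 𝔓 a nonempty set of probability measures on Ω, and Ψ : Ω × ℝ^d → ℝ ∪ {-∞} jointly measurable with Ψ(ω, ·) concave and upper-semicontinuous for each ω, Ψ ≤ C uniformly, and inf_{P∈𝔓} E^P[Ψ(h°)] > -∞ for some h° ∈ ℝ^d. If the set K := {h ∈ ℝ^d : Ψ^∞(h) ≥ 0 𝔓-quasi-surely} is a linear subspace, then there exists ĥ ∈ ℝ^d such that inf_{P∈𝔓} E^P[Ψ(ĥ)] = sup_{h∈ℝ^d} inf_{P∈𝔓} E^P[Ψ(h)].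 -/
open MeasureTheory Filter
open scoped ENNReal NNReal Topology

section AuxStmt10

open scoped NNReal Topology

namespace Stmt10Aux

lemma e2e_top : erealToENNReal ⊤ = ⊤ := if_pos rfl

lemma e2e_coe (r : ℝ) : erealToENNReal (r : EReal) = ENNReal.ofReal r := by
  rw [erealToENNReal, if_neg (by simp), EReal.toReal_coe]

lemma e2e_bot : erealToENNReal ⊥ = 0 := by
  rw [erealToENNReal, if_neg (by simp), EReal.toReal_bot, ENNReal.ofReal_zero]

lemma e2e_mono : Monotone erealToENNReal := by
  intro x y hxy
  induction y using EReal.rec with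
  | bot => rw [le_bot_iff] at hxy; subst hxy; exact le_rfl
  | top => exact le_top
  | coe s =>
    induction x using EReal.rec with
    | bot => rw [e2e_bot]; exact zero_le
    | top => exact absurd hxy (by simp)
    | coe r =>
      rw [e2e_coe, e2e_coe]
      exact ENNReal.ofReal_le_ofReal (EReal.coe_le_coe_iff.1 hxy)

lemma sub_antitone (C : ℝ) : Antitone (fun x : EReal => (C : EReal) - x) :=
  fun _ _ h => EReal.sub_le_sub le_rfl h

lemma e2e_sub_bot (C : ℝ) : erealToENNReal ((C : EReal) - ⊥) = ⊤ := by
  rw [EReal.coe_sub_bot, e2e_top]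

/-- Key translation: `r ≤ C - t` iff `t ≤ ofReal (C - r)`, for `r ≤ C`. -/
lemma coe_le_sub_iff {r C : ℝ} (hr : r ≤ C) (t : ℝ≥0∞) :
    (r : EReal) ≤ (C : EReal) - (t : EReal) ↔ t ≤ ENNReal.ofReal (C - r) := by
  by_cases ht : t = ⊤
  · subst ht
    simp only [EReal.coe_ennreal_top, EReal.sub_top]
    constructor
    · intro h; exact absurd h (by simp)
    · intro h; exact absurd h (by simp [ENNReal.ofReal_lt_top.ne])
  · obtain ⟨s, rfl⟩ : ∃ s : ℝ≥0, t = (s : ℝ≥0∞) := ⟨t.toNNReal, (ENNReal.coe_toNNReal ht).symm⟩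
    have h1 : ((s : ℝ≥0∞) : EReal) = ((s : ℝ) : EReal) := EReal.coe_nnreal_eq_coe_real s
    rw [h1, show (C : EReal) - ((s : ℝ) : EReal) = ((C - (s:ℝ) : ℝ) : EReal) from (EReal.coe_sub _ _),
      EReal.coe_le_coe_iff]
    rw [show (s : ℝ≥0∞) = ENNReal.ofReal (s:ℝ) from ENNReal.ofReal_coe_nnreal.symm]
    rw [ENNReal.ofReal_le_ofReal_iff (by linarith)]
    constructor <;> intro h <;> linarith [s.coe_nonneg]

lemma ereal_combo_le {a b : ℝ} (ha : 0 ≤ a) (hb : 0 ≤ b) {X Y : EReal} {r s : ℝ}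
    (hr : (r : EReal) ≤ X) (hs : (s : EReal) ≤ Y) :
    ((a * r + b * s : ℝ) : EReal) ≤ (a : EReal) * X + (b : EReal) * Y := by
  rw [EReal.coe_add, EReal.coe_mul, EReal.coe_mul]
  exact add_le_add (mul_le_mul_of_nonneg_left hr (EReal.coe_nonneg.2 ha))
    (mul_le_mul_of_nonneg_left hs (EReal.coe_nonneg.2 hb))

lemma e2e_concave_ineq {a b C : ℝ} (ha : 0 ≤ a) (hb : 0 ≤ b) (hab : a + b = 1)
    {X Y Z : EReal} (hX : X ≤ (C : EReal)) (hY : Y ≤ (C : EReal)) (hZ : Z ≤ (C : EReal))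
    (h : (a : EReal) * X + (b : EReal) * Y ≤ Z) :
    erealToENNReal ((C : EReal) - Z)
      ≤ ENNReal.ofReal a * erealToENNReal ((C : EReal) - X)
        + ENNReal.ofReal b * erealToENNReal ((C : EReal) - Y) := by
  rcases eq_or_lt_of_le ha with ha0 | ha0
  · obtain rfl : a = 0 := ha0.symm
    obtain rfl : b = 1 := by linarith
    have hYZ : Y ≤ Z := by simpa using h
    simpa using le_trans (e2e_mono (sub_antitone C hYZ)) le_rfl
  rcases eq_or_lt_of_le hb with hb0 | hb0
  · obtain rfl : b = 0 := hb0.symm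
    obtain rfl : a = 1 := by linarith
    have hXZ : X ≤ Z := by simpa using h
    simpa using le_trans (e2e_mono (sub_antitone C hXZ)) le_rfl
  by_cases hXbot : X = ⊥
  · subst hXbot
    rw [e2e_sub_bot, ENNReal.mul_top (ENNReal.ofReal_pos.2 ha0).ne']
    exact le_trans le_top le_self_add
  by_cases hYbot : Y = ⊥
  · subst hYbot
    rw [e2e_sub_bot (C := C), ENNReal.mul_top (ENNReal.ofReal_pos.2 hb0).ne']
    exact le_trans le_top le_add_self
  obtain ⟨x, rfl⟩ : ∃ x : ℝ, X = (x : EReal) :=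
    ⟨X.toReal, (EReal.coe_toReal (lt_of_le_of_lt hX (EReal.coe_lt_top C)).ne hXbot).symm⟩
  obtain ⟨y, rfl⟩ : ∃ y : ℝ, Y = (y : EReal) :=
    ⟨Y.toReal, (EReal.coe_toReal (lt_of_le_of_lt hY (EReal.coe_lt_top C)).ne hYbot).symm⟩
  have hZbot : Z ≠ ⊥ := by
    intro hzb; rw [hzb, le_bot_iff] at h
    rw [← EReal.coe_mul, ← EReal.coe_mul, ← EReal.coe_add] at h
    exact (EReal.coe_ne_bot _) h
  obtain ⟨z, rfl⟩ : ∃ z : ℝ, Z = (z : EReal) :=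
    ⟨Z.toReal, (EReal.coe_toReal (lt_of_le_of_lt hZ (EReal.coe_lt_top C)).ne hZbot).symm⟩
  rw [← EReal.coe_mul, ← EReal.coe_mul, ← EReal.coe_add, EReal.coe_le_coe_iff] at h
  have hxC : x ≤ C := EReal.coe_le_coe_iff.1 hX
  have hyC : y ≤ C := EReal.coe_le_coe_iff.1 hY
  rw [← EReal.coe_sub, ← EReal.coe_sub, ← EReal.coe_sub, e2e_coe, e2e_coe, e2e_coe,
    ← ENNReal.ofReal_mul ha, ← ENNReal.ofReal_mul hb,
    ← ENNReal.ofReal_add (mul_nonneg ha (by linarith)) (mul_nonneg hb (by linarith))]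
  have e : a * (C - x) + b * (C - y) = (a + b) * C - (a * x + b * y) := by ring
  rw [hab, one_mul] at e
  exact ENNReal.ofReal_le_ofReal (by linarith)

lemma ereal_div_le {a c : ℝ} (ha : 0 < a) {Z : EReal} (h : (a : EReal) * Z ≤ (c : ℝ)) :
    Z ≤ ((c / a : ℝ) : EReal) := by
  have h2 := mul_le_mul_of_nonneg_left h (EReal.coe_nonneg.2 (le_of_lt (inv_pos.2 ha)))
  rw [← mul_assoc, ← EReal.coe_mul, inv_mul_cancel₀ ha.ne', ← EReal.coe_mul] at h2
  simpa [div_eq_inv_mul] using h2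

lemma sub_coe_nonneg {X : EReal} {r : ℝ} (h : (r : EReal) ≤ X) : 0 ≤ X - (r : EReal) := by
  induction X using EReal.rec with
  | bot => exact absurd h (by simp)
  | top => rw [EReal.top_sub_coe]; exact le_top
  | coe x =>
    rw [← EReal.coe_sub]
    exact EReal.coe_nonneg.2 (by linarith [EReal.coe_le_coe_iff.1 h])

lemma coe_le_of_mul_sub_nonneg {X : EReal} {r c : ℝ} (hc : 0 < c)
    (h : 0 ≤ (c : EReal) * (X - (r : EReal))) : (r : EReal) ≤ X := by
  induction X using EReal.rec with
  | bot =>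
    rw [EReal.bot_sub, EReal.coe_mul_bot_of_pos hc] at h
    exact absurd h (by simp)
  | top => exact le_top
  | coe x =>
    rw [← EReal.coe_sub, ← EReal.coe_mul] at h
    have := EReal.coe_nonneg.1 h
    exact EReal.coe_le_coe_iff.2 (by nlinarith)

lemma hor_nonneg_of_steps {d : ℕ} {f : (Fin d → ℝ) → EReal} {x k : Fin d → ℝ} {r : ℝ}
    (hfx : f x = (r : EReal)) (h : ∀ n : ℕ+, (r : EReal) ≤ f (x + (n : ℝ) • k)) :
    0 ≤ hor f x k := by
  refine le_iInf fun n => ?_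
  rw [hfx]
  exact mul_nonneg (EReal.coe_nonneg.2 (le_of_lt (inv_pos.2 (by exact_mod_cast n.pos))))
    (sub_coe_nonneg (h n))

lemma steps_of_hor_nonneg {d : ℕ} {f : (Fin d → ℝ) → EReal} {x k : Fin d → ℝ} {r : ℝ}
    (hfx : f x = (r : EReal)) (h : 0 ≤ hor f x k) :
    ∀ n : ℕ+, (r : EReal) ≤ f (x + (n : ℝ) • k) := by
  intro n
  have h1 : (0 : EReal) ≤ ((n : ℝ)⁻¹ : EReal) * (f (x + (n : ℝ) • k) - f x) :=
    le_trans h (iInf_le _ n)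
  rw [hfx] at h1
  exact coe_le_of_mul_sub_nonneg (inv_pos.2 (by exact_mod_cast n.pos)) h1

lemma Q2 {d : ℕ} {f : (Fin d → ℝ) → EReal} (hf : IsConcaveE f)
    {x k : Fin d → ℝ} {n m : ℕ} (hn : 0 < n) (hnm : n ≤ m) {r ε : ℝ}
    (hfx : (r : EReal) ≤ f x)
    (hε : f (x + (n : ℝ) • k) ≤ ((r - ε : ℝ) : EReal)) :
    f (x + (m : ℝ) • k) ≤ ((r - ((m : ℝ) / n) * ε : ℝ) : EReal) := by
  have hn' : (0:ℝ) < n := by exact_mod_cast hn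
  have hm' : (0:ℝ) < m := by exact_mod_cast lt_of_lt_of_le hn hnm
  set a : ℝ := (n : ℝ) / m with ha_def
  have ha : 0 ≤ a := by positivity
  have hb : 0 ≤ 1 - a := by
    have : a ≤ 1 := by rw [ha_def, div_le_one hm']; exact_mod_cast hnm
    linarith
  have hvec : a • (x + (m : ℝ) • k) + (1 - a) • x = x + (n : ℝ) • k := by
    funext i
    simp only [Pi.add_apply, Pi.smul_apply, smul_eq_mul, ha_def]
    field_simp
    ring
  have h1 : (a : EReal) * f (x + (m : ℝ) • k) + ((1 - a : ℝ) : EReal) * f x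
      ≤ f (x + (n : ℝ) • k) := by
    rw [← hvec]; exact hf _ _ a (1 - a) ha hb (by ring)
  have h2 : (((1 - a) * r : ℝ) : EReal) ≤ ((1 - a : ℝ) : EReal) * f x := by
    rw [EReal.coe_mul]
    exact mul_le_mul_of_nonneg_left hfx (EReal.coe_nonneg.2 hb)
  have h3 : (a : EReal) * f (x + (m : ℝ) • k) + (((1 - a) * r : ℝ) : EReal)
      ≤ ((r - ε : ℝ) : EReal) :=
    le_trans (add_le_add_right h2 _) (h1.trans hε)
  have h4 : (a : EReal) * f (x + (m : ℝ) • k) ≤ ((r - ε - (1 - a) * r : ℝ) : EReal) := by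
    rw [show ((r - ε - (1 - a) * r : ℝ) : EReal)
        = ((r - ε : ℝ) : EReal) - (((1 - a) * r : ℝ) : EReal) by rw [← EReal.coe_sub]]
    exact (EReal.le_sub_iff_add_le (Or.inl (EReal.coe_ne_bot _))
      (Or.inl (EReal.coe_ne_top _))).2 h3
  have h5 := ereal_div_le (by positivity : (0:ℝ) < a) h4
  have heq : (r - ε - (1 - a) * r) / a = r - ((m : ℝ) / n) * ε := by
    rw [ha_def]; field_simp; ring
  rwa [heq] at h5

section Int

variable {Ω : Type*} [MeasurableSpace Ω] {P : MeasureTheory.Measure Ω} {C : ℝ}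
  {g g₁ g₂ g₃ : Ω → EReal}

lemma e2e_antitone (C : ℝ) : Antitone (fun x : EReal => erealToENNReal ((C : EReal) - x)) :=
  e2e_mono.comp_antitone (sub_antitone C)

lemma measurable_U (hg : Measurable g) :
    Measurable fun ω => erealToENNReal ((C : EReal) - g ω) :=
  ((e2e_antitone C).measurable).comp hg

lemma expE_le_coe : expE P C g ≤ (C : EReal) := by
  rw [expE]
  refine le_trans (EReal.sub_le_sub le_rfl (EReal.coe_ennreal_nonneg _)) ?_
  rw [sub_zero]

lemma expE_mono_ae (h : ∀ᵐ ω ∂P, g₁ ω ≤ g₂ ω) : expE P C g₁ ≤ expE P C g₂ := by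
  rw [expE, expE]
  refine EReal.sub_le_sub le_rfl ?_
  rw [EReal.coe_ennreal_le_coe_ennreal_iff]
  exact MeasureTheory.lintegral_mono_ae (h.mono fun ω hω => e2e_antitone C hω)

lemma coe_le_expE_iff {r : ℝ} (hr : r ≤ C) :
    (r : EReal) ≤ expE P C g ↔
      (∫⁻ ω, erealToENNReal ((C : EReal) - g ω) ∂P) ≤ ENNReal.ofReal (C - r) :=
  coe_le_sub_iff hr _

lemma expE_combo (m₁ : Measurable g₁) (m₂ : Measurable g₂)
    (hb₁ : ∀ ω, g₁ ω ≤ (C : EReal)) (hb₂ : ∀ ω, g₂ ω ≤ (C : EReal))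
    (hb₃ : ∀ ω, g₃ ω ≤ (C : EReal))
    {a b : ℝ} (ha : 0 ≤ a) (hb : 0 ≤ b) (hab : a + b = 1)
    (hcomb : ∀ ω, (a : EReal) * g₁ ω + (b : EReal) * g₂ ω ≤ g₃ ω)
    {r s : ℝ} (hr : (r : EReal) ≤ expE P C g₁) (hs : (s : EReal) ≤ expE P C g₂) :
    ((a * r + b * s : ℝ) : EReal) ≤ expE P C g₃ := by
  have hrC : r ≤ C := EReal.coe_le_coe_iff.1 (hr.trans expE_le_coe)
  have hsC : s ≤ C := EReal.coe_le_coe_iff.1 (hs.trans expE_le_coe)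
  have hrsC : a * r + b * s ≤ C := by
    have hsum : a * C + b * C = C := by linear_combination C * hab
    nlinarith [mul_le_mul_of_nonneg_left hrC ha, mul_le_mul_of_nonneg_left hsC hb]
  rw [coe_le_expE_iff hrC] at hr
  rw [coe_le_expE_iff hsC] at hs
  rw [coe_le_expE_iff hrsC]
  calc ∫⁻ ω, erealToENNReal ((C : EReal) - g₃ ω) ∂P
      ≤ ∫⁻ ω, (ENNReal.ofReal a * erealToENNReal ((C : EReal) - g₁ ω)
          + ENNReal.ofReal b * erealToENNReal ((C : EReal) - g₂ ω)) ∂P :=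
        MeasureTheory.lintegral_mono fun ω =>
          e2e_concave_ineq ha hb hab (hb₁ ω) (hb₂ ω) (hb₃ ω) (hcomb ω)
    _ = ENNReal.ofReal a * (∫⁻ ω, erealToENNReal ((C : EReal) - g₁ ω) ∂P)
          + ENNReal.ofReal b * (∫⁻ ω, erealToENNReal ((C : EReal) - g₂ ω) ∂P) := by
        rw [MeasureTheory.lintegral_add_left ((measurable_U m₁).const_mul _),
          MeasureTheory.lintegral_const_mul _ (measurable_U m₁),
          MeasureTheory.lintegral_const_mul _ (measurable_U m₂)]
    _ ≤ ENNReal.ofReal a * ENNReal.ofReal (C - r) + ENNReal.ofReal b * ENNReal.ofReal (C - s) :=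
        add_le_add (mul_le_mul_right hr _) (mul_le_mul_right hs _)
    _ = ENNReal.ofReal (C - (a * r + b * s)) := by
        rw [← ENNReal.ofReal_mul ha, ← ENNReal.ofReal_mul hb,
          ← ENNReal.ofReal_add (mul_nonneg ha (by linarith)) (mul_nonneg hb (by linarith))]
        congr 1
        linear_combination C * hab

lemma expE_fatou {x : ℕ → Ω → EReal} (hm : ∀ n, Measurable (x n))
    (hpt : ∀ ω, erealToENNReal ((C : EReal) - g ω)
      ≤ Filter.liminf (fun n => erealToENNReal ((C : EReal) - x n ω)) Filter.atTop)
    {s : ℝ} (hsC : s ≤ C) (hs : ∀ n, (s : EReal) ≤ expE P C (x n)) :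
    (s : EReal) ≤ expE P C g := by
  rw [coe_le_expE_iff hsC]
  calc ∫⁻ ω, erealToENNReal ((C : EReal) - g ω) ∂P
      ≤ ∫⁻ ω, Filter.liminf (fun n => erealToENNReal ((C : EReal) - x n ω)) Filter.atTop ∂P :=
        MeasureTheory.lintegral_mono hpt
    _ ≤ Filter.liminf (fun n => ∫⁻ ω, erealToENNReal ((C : EReal) - x n ω) ∂P) Filter.atTop :=
        MeasureTheory.lintegral_liminf_le fun n => measurable_U (hm n)
    _ ≤ ENNReal.ofReal (C - s) := by
        refine Filter.liminf_le_of_le (by isBoundedDefault) ?_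
        intro b hb
        obtain ⟨n, hn⟩ := hb.exists
        exact hn.trans ((coe_le_expE_iff hsC).1 (hs n))

end Int

lemma liminf_e2e_of_usc {d : ℕ} {f : (Fin d → ℝ) → EReal} {C : ℝ}
    (husc : UpperSemicontinuous f) (hbf : ∀ w, f w ≤ (C : EReal))
    {z : Fin d → ℝ} {zs : ℕ → Fin d → ℝ} (hz : Filter.Tendsto zs Filter.atTop (𝓝 z)) :
    erealToENNReal ((C : EReal) - f z)
      ≤ Filter.liminf (fun n => erealToENNReal ((C : EReal) - f (zs n))) Filter.atTop := by
  by_contra hlt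
  push_neg at hlt
  set B := Filter.liminf (fun n => erealToENNReal ((C : EReal) - f (zs n))) Filter.atTop with hB
  obtain ⟨y, hy1, hy2⟩ : ∃ y : ℝ, f z < (y : EReal) ∧ B < ENNReal.ofReal (C - y) := by
    have hBt : B ≠ ⊤ := by
      intro h
      rw [h] at hlt
      exact absurd hlt (by simp)
    by_cases hfzb : f z = ⊥
    · refine ⟨C - B.toReal - 1, by rw [hfzb]; exact EReal.bot_lt_coe _, ?_⟩
      rw [show C - (C - B.toReal - 1) = B.toReal + 1 by ring]
      exact (ENNReal.lt_ofReal_iff_toReal_lt hBt).2 (by linarith)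
    · have hfzt : f z ≠ ⊤ := (lt_of_le_of_lt (hbf z) (EReal.coe_lt_top C)).ne
      obtain ⟨v, hfz⟩ : ∃ v : ℝ, f z = (v : EReal) :=
        ⟨(f z).toReal, (EReal.coe_toReal hfzt hfzb).symm⟩
      rw [hfz, ← EReal.coe_sub, e2e_coe] at hlt
      have hBv : B.toReal < C - v := (ENNReal.lt_ofReal_iff_toReal_lt hBt).1 hlt
      have hBnn : (0:ℝ) ≤ B.toReal := ENNReal.toReal_nonneg
      refine ⟨v + (C - v - B.toReal) / 2, ?_, ?_⟩
      · rw [hfz]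
        exact EReal.coe_lt_coe_iff.2 (by linarith)
      · rw [show C - (v + (C - v - B.toReal) / 2) = (C - v + B.toReal) / 2 by ring]
        exact (ENNReal.lt_ofReal_iff_toReal_lt hBt).2 (by linarith)
  have hev : ∀ᶠ n in Filter.atTop, ENNReal.ofReal (C - y)
      ≤ erealToENNReal ((C : EReal) - f (zs n)) := by
    filter_upwards [hz.eventually (husc z (y : EReal) hy1)] with n hn
    rw [← e2e_coe (C - y), EReal.coe_sub]
    exact e2e_antitone C hn.le
  exact absurd (Filter.le_liminf_of_le (by isBoundedDefault) hev) (not_le.2 hy2)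

lemma step4 {Ω : Type*} [MeasurableSpace Ω] {P : MeasureTheory.Measure Ω} {d : ℕ}
    {Ψ : Ω → (Fin d → ℝ) → EReal} {C : ℝ}
    (hmeas : ∀ h, Measurable fun ω => Ψ ω h)
    (hconc : ∀ ω, IsConcaveE (Ψ ω)) (hbd : ∀ ω z, Ψ ω z ≤ (C : EReal))
    {h₀ k : Fin d → ℝ} {B : ℝ≥0∞} (hB : B ≠ ⊤)
    (hbase : ∫⁻ ω, erealToENNReal ((C : EReal) - Ψ ω h₀) ∂P ≤ B)
    (hints : ∀ n : ℕ+, ∫⁻ ω, erealToENNReal ((C : EReal) - Ψ ω (h₀ + (n : ℝ) • k)) ∂P ≤ B) :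
    ∀ᵐ ω ∂P, 0 ≤ hor (Ψ ω) h₀ k := by
  have hS : ∀ᵐ ω ∂P, Ψ ω h₀ ≠ ⊥ := by
    filter_upwards [MeasureTheory.ae_lt_top (measurable_U (hmeas h₀))
      (lt_of_le_of_lt hbase hB.lt_top).ne] with ω hω hbot
    rw [hbot, e2e_sub_bot] at hω
    exact absurd hω (lt_irrefl _)
  set u : ℕ → Ω → ℝ≥0∞ :=
    fun m ω => erealToENNReal ((C : EReal) - Ψ ω (h₀ + ((m + 1 : ℕ) : ℝ) • k)) with hu
  have hucast : ∀ m : ℕ, ∀ ω, u m ω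
      = erealToENNReal ((C : EReal) - Ψ ω (h₀ + ((m.succPNat : ℕ+) : ℝ) • k)) := by
    intro m ω
    have hc : ((m.succPNat : ℕ+) : ℝ) = ((m + 1 : ℕ) : ℝ) := by norm_cast
    rw [hu, hc]
  have hfin : ∀ᵐ ω ∂P, Filter.liminf (fun m => u m ω) Filter.atTop < ⊤ := by
    refine MeasureTheory.ae_lt_top (Measurable.liminf fun m => measurable_U (hmeas _)) ?_
    refine (lt_of_le_of_lt
      (MeasureTheory.lintegral_liminf_le fun m => measurable_U (hmeas _)) ?_).ne
    refine lt_of_le_of_lt (Filter.liminf_le_of_le (by isBoundedDefault) ?_) hB.lt_top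
    intro b hb
    obtain ⟨m, hm⟩ := hb.exists
    refine hm.trans ?_
    have := hints (m.succPNat)
    simp only [hucast] at *
    exact this
  filter_upwards [hS, hfin] with ω hbot hli
  obtain ⟨r, hr⟩ : ∃ r : ℝ, Ψ ω h₀ = (r : EReal) :=
    ⟨(Ψ ω h₀).toReal,
      (EReal.coe_toReal (lt_of_le_of_lt (hbd ω h₀) (EReal.coe_lt_top C)).ne hbot).symm⟩
  refine hor_nonneg_of_steps hr fun n => ?_
  by_contra hlt
  push_neg at hlt
  obtain ⟨ε, hε0, hεle⟩ :
      ∃ ε : ℝ, 0 < ε ∧ Ψ ω (h₀ + (n : ℝ) • k) ≤ ((r - ε : ℝ) : EReal) := by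
    by_cases hb2 : Ψ ω (h₀ + (n : ℝ) • k) = ⊥
    · exact ⟨1, one_pos, by rw [hb2]; exact bot_le⟩
    · obtain ⟨v, hv⟩ : ∃ v : ℝ, Ψ ω (h₀ + (n : ℝ) • k) = (v : EReal) :=
        ⟨(Ψ ω (h₀ + (n : ℝ) • k)).toReal,
          (EReal.coe_toReal (lt_of_le_of_lt (hbd ω _) (EReal.coe_lt_top C)).ne hb2).symm⟩
      have hvr : v < r := by
        rw [hv] at hlt; exact_mod_cast hlt
      exact ⟨r - v, by linarith, by rw [hv]; norm_num⟩
  have hn0 : 0 < (n : ℕ) := n.pos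
  have hn0' : (0 : ℝ) < ((n : ℕ) : ℝ) := by exact_mod_cast hn0
  set L := Filter.liminf (fun m => u m ω) Filter.atTop with hL
  have hLt : L ≠ ⊤ := hli.ne
  have key : ∀ M : ℝ, ENNReal.ofReal M ≤ L := by
    intro M
    refine Filter.le_liminf_of_le (by isBoundedDefault) ?_
    obtain ⟨N, hN⟩ := exists_nat_ge (max ((n : ℕ) : ℝ) ((n : ℕ) * (M - C + r) / ε))
    refine Filter.eventually_atTop.2 ⟨N, fun m hm => ?_⟩
    have hmn : (n : ℕ) ≤ m + 1 := by
      have h1 : ((n : ℕ) : ℝ) ≤ (N : ℝ) := le_trans (le_max_left _ _) hN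
      have h2 : (N : ℝ) ≤ (m : ℝ) := by exact_mod_cast hm
      have h3 : ((n : ℕ) : ℝ) ≤ (m : ℝ) + 1 := by linarith
      exact_mod_cast h3
    have hq : Ψ ω (h₀ + ((m + 1 : ℕ) : ℝ) • k)
        ≤ ((r - (((m + 1 : ℕ) : ℝ) / ((n : ℕ) : ℝ)) * ε : ℝ) : EReal) := by
      have hfx : (r : EReal) ≤ Ψ ω h₀ := le_of_eq hr.symm
      have := Q2 (hconc ω) hn0 hmn hfx (by exact_mod_cast hεle)
      exact_mod_cast this
    have harith : M ≤ C - (r - (((m + 1 : ℕ) : ℝ) / ((n : ℕ) : ℝ)) * ε) := by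
      have h2 : (n : ℕ) * (M - C + r) / ε ≤ (m : ℝ) :=
        le_trans (le_max_right _ _) (hN.trans (by exact_mod_cast hm))
      rw [div_le_iff₀ hε0] at h2
      have h3 : ((n:ℕ):ℝ) * (M - C + r) ≤ ((m:ℝ) + 1) * ε := by nlinarith
      have h4 : M - C + r ≤ ((m + 1 : ℕ) : ℝ) / ((n : ℕ) : ℝ) * ε := by
        rw [div_mul_eq_mul_div, le_div_iff₀ hn0']
        push_cast
        nlinarith
      linarith
    calc ENNReal.ofReal M
        ≤ ENNReal.ofReal (C - (r - (((m + 1 : ℕ) : ℝ) / ((n : ℕ) : ℝ)) * ε)) :=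
          ENNReal.ofReal_le_ofReal harith
      _ = erealToENNReal ((C : EReal)
            - ((r - (((m + 1 : ℕ) : ℝ) / ((n : ℕ) : ℝ)) * ε : ℝ) : EReal)) := by
          rw [← EReal.coe_sub, e2e_coe]
      _ ≤ u m ω := e2e_antitone C hq
  have h1 : ENNReal.ofReal (L.toReal + 1) ≤ L := key _
  rw [ENNReal.ofReal_le_iff_le_toReal hLt] at h1
  linarith

lemma L1 {d : ℕ} {f : (Fin d → ℝ) → EReal} (hf : IsConcaveE f)
    (husc : UpperSemicontinuous f) {h₀ k : Fin d → ℝ} (hne : f h₀ ≠ ⊥)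
    (hrec : ∀ n : ℕ+, f h₀ ≤ f (h₀ + (n : ℝ) • k))
    (x : Fin d → ℝ) {t : ℝ} (ht : 0 ≤ t) : f x ≤ f (x + t • k) := by
  rcases eq_or_lt_of_le ht with ht0 | ht0
  · rw [← ht0, zero_smul, add_zero]
  have main : ∀ r : ℝ, (r : EReal) ≤ f x → (r : EReal) ≤ f (x + t • k) := by
    obtain ⟨r₀, -, hr₀⟩ := EReal.exists_between_coe_real (bot_lt_iff_ne_bot.2 hne)
    have hr₀le : (r₀ : EReal) ≤ f h₀ := hr₀.le
    intro r hrx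
    by_contra hcon
    push_neg at hcon
    obtain ⟨y, hy1, hy2⟩ := EReal.exists_between_coe_real hcon
    have hyr : y < r := EReal.coe_lt_coe_iff.1 hy2
    set lam : ℕ → ℝ := fun m => t / (m + 1) with hlam
    have hlamnn : ∀ m, 0 ≤ lam m := fun m => div_nonneg ht (by positivity)
    have hlam0 : Filter.Tendsto lam Filter.atTop (𝓝 0) := by
      have h1 := tendsto_one_div_add_atTop_nhds_zero_nat.const_mul t
      rw [mul_zero] at h1
      refine h1.congr fun m => ?_
      rw [hlam]
      field_simp
    set z : ℕ → (Fin d → ℝ) := fun m => x + t • k + lam m • (h₀ - x) with hz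
    have hzt : Filter.Tendsto z Filter.atTop (𝓝 (x + t • k)) := by
      have h2 : Filter.Tendsto (fun m : ℕ => lam m • (h₀ - x)) Filter.atTop
          (𝓝 (0 : Fin d → ℝ)) := by
        simpa using hlam0.smul_const (h₀ - x)
      simpa using tendsto_const_nhds.add h2
    have hev1 : ∀ᶠ m in Filter.atTop, f (z m) < (y : EReal) :=
      hzt.eventually (husc _ (y : EReal) hy1)
    have hev2 : ∀ᶠ m in Filter.atTop, (y : ℝ) < (1 - lam m) * r + lam m * r₀ := by
      have hc : Filter.Tendsto (fun m : ℕ => (1 - lam m) * r + lam m * r₀)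
          Filter.atTop (𝓝 r) := by
        have h3 : Filter.Tendsto (fun m : ℕ => r + lam m * (r₀ - r)) Filter.atTop
            (𝓝 (r + 0 * (r₀ - r))) :=
          (tendsto_const_nhds (x := r)).add (hlam0.mul_const (r₀ - r))
        rw [zero_mul, add_zero] at h3
        exact h3.congr fun m => by ring
      exact hc.eventually (eventually_gt_nhds hyr)
    have hev3 : ∀ᶠ m in Filter.atTop, lam m < 1 :=
      hlam0.eventually (eventually_lt_nhds zero_lt_one)
    obtain ⟨m, hm1, hm2, hm3⟩ := (hev1.and (hev2.and hev3)).exists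
    have hvec : (1 - lam m) • x + lam m • (h₀ + ((m + 1 : ℕ) : ℝ) • k) = z m := by
      funext i
      simp only [hz, hlam, Pi.add_apply, Pi.smul_apply, Pi.sub_apply, smul_eq_mul]
      push_cast
      field_simp
      ring
    have hstep : (r₀ : EReal) ≤ f (h₀ + ((m + 1 : ℕ) : ℝ) • k) := by
      have h5 := hr₀le.trans (hrec m.succPNat)
      have hcast : ((m.succPNat : ℕ+) : ℝ) = ((m + 1 : ℕ) : ℝ) := by norm_cast
      rwa [hcast] at h5
    have hcomb : (((1 - lam m) * r + lam m * r₀ : ℝ) : EReal) ≤ f (z m) := by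
      refine le_trans (ereal_combo_le (by linarith [hm3]) (hlamnn m) hrx hstep) ?_
      rw [← hvec]
      exact hf _ _ _ _ (by linarith [hm3]) (hlamnn m) (by ring)
    have h6 : (y : EReal) < f (z m) := lt_of_lt_of_le (EReal.coe_lt_coe_iff.2 hm2) hcomb
    exact absurd (h6.trans hm1) (lt_irrefl _)
  by_cases hfx : f x = ⊥
  · rw [hfx]; exact bot_le
  · by_contra hcon2
    push_neg at hcon2
    obtain ⟨w, hw1, hw2⟩ := EReal.exists_between_coe_real hcon2
    exact absurd (main w hw2.le) (not_le.2 hw1)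

end Stmt10Aux

end AuxStmt10

/-- one-period robust maximizer existence. If
`K := {h | Ψ^∞(h) ≥ 0 𝔓-q.s.}` is a linear subspace, then
`sup_h inf_i E^{Pᵢ}[Ψ(h)]` is attained by some `ĥ ∈ ℝ^d`. -/
theorem stmt10 {Ω : Type*} [MeasurableSpace Ω] {ι : Type*} [Nonempty ι]
    (P : ι → Measure Ω) [∀ i, IsProbabilityMeasure (P i)]
    {d : ℕ} (Ψ : Ω → (Fin d → ℝ) → EReal) (C : ℝ)
    (hmeas : Measurable (Function.uncurry Ψ))
    (hconc : ∀ ω, IsConcaveE (Ψ ω))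
    (husc : ∀ ω, UpperSemicontinuous (Ψ ω))
    (hbd : ∀ ω z, Ψ ω z ≤ (C : EReal))
    (h₀ : Fin d → ℝ) (hh₀ : (⨅ i, expE (P i) C (fun ω => Ψ ω h₀)) ≠ ⊥)
    (hNA : ∃ S : Submodule ℝ (Fin d → ℝ),
      (S : Set (Fin d → ℝ)) = {h | ∀ i, ∀ᵐ ω ∂(P i), 0 ≤ hor (Ψ ω) h₀ h}) :
    ∃ hhat : Fin d → ℝ,
      (⨅ i, expE (P i) C (fun ω => Ψ ω hhat))
        = ⨆ h : Fin d → ℝ, ⨅ i, expE (P i) C (fun ω => Ψ ω h) := by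
  classical
  have hmeas' : ∀ h : Fin d → ℝ, Measurable fun ω => Ψ ω h := fun h =>
    hmeas.comp (measurable_prodMk_right)
  set Φ : (Fin d → ℝ) → EReal := fun h => ⨅ i, expE (P i) C (fun ω => Ψ ω h) with hΦ
  suffices hgoal : ∃ hhat : Fin d → ℝ, Φ hhat = ⨆ h : Fin d → ℝ, Φ h by
    obtain ⟨a, ha⟩ := hgoal
    exact ⟨a, by rw [hΦ] at ha; simpa using ha⟩
  obtain ⟨i₀⟩ := ‹Nonempty ι›
  have Φle : ∀ (h : Fin d → ℝ) i, Φ h ≤ expE (P i) C (fun ω => Ψ ω h) := by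
    intro h i; rw [hΦ]; exact iInf_le _ i
  have ΦleC : ∀ h, Φ h ≤ (C : EReal) := fun h => (Φle h i₀).trans Stmt10Aux.expE_le_coe
  have comboΦ : ∀ (a b : ℝ), 0 ≤ a → 0 ≤ b → a + b = 1 → ∀ (x y : Fin d → ℝ) (r s : ℝ),
      (r : EReal) ≤ Φ x → (s : EReal) ≤ Φ y →
      ((a * r + b * s : ℝ) : EReal) ≤ Φ (a • x + b • y) := by
    intro a b ha hb hab x y r s hr hs
    rw [hΦ]
    refine le_iInf fun i => ?_
    exact Stmt10Aux.expE_combo (hmeas' x) (hmeas' y) (fun ω => hbd ω x) (fun ω => hbd ω y)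
      (fun ω => hbd ω _) ha hb hab (fun ω => hconc ω x y a b ha hb hab)
      (hr.trans (Φle x i)) (hs.trans (Φle y i))
  have hypo : ∀ (x : ℕ → Fin d → ℝ) (x₀ : Fin d → ℝ), Tendsto x atTop (𝓝 x₀) →
      ∀ (c : ℕ → ℝ) (r : ℝ), Tendsto c atTop (𝓝 r) → (∀ m, (c m : EReal) ≤ Φ (x m)) →
      (r : EReal) ≤ Φ x₀ := by
    intro x x₀ hx c r hc hcle
    have hcC : ∀ m, c m ≤ C := fun m => EReal.coe_le_coe_iff.1 ((hcle m).trans (ΦleC _))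
    suffices hsuff : ∀ ε : ℝ, 0 < ε → ((r - ε : ℝ) : EReal) ≤ Φ x₀ by
      by_contra hcon
      push_neg at hcon
      obtain ⟨y, hy1, hy2⟩ := EReal.exists_between_coe_real hcon
      have hyr : y < r := EReal.coe_lt_coe_iff.1 hy2
      have h7 := hsuff (r - y) (by linarith)
      rw [show r - (r - y) = y by ring] at h7
      exact absurd h7 (not_le.2 hy1)
    intro ε hε
    obtain ⟨N, hN⟩ := eventually_atTop.1
      (hc.eventually (eventually_gt_nhds (show r - ε < r by linarith)))
    rw [hΦ]
    refine le_iInf fun i => ?_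
    refine Stmt10Aux.expE_fatou (fun j => hmeas' (x (j + N)))
      (fun ω => Stmt10Aux.liminf_e2e_of_usc (husc ω) (hbd ω)
        (hx.comp (tendsto_add_atTop_nat N))) (by linarith [hcC N, hN N le_rfl]) ?_
    intro j
    refine le_trans (EReal.coe_le_coe_iff.2 (hN (j + N) (by omega)).le) ?_
    exact (hcle (j + N)).trans (Φle _ i)
  have hΦh₀bot : Φ h₀ ≠ ⊥ := by rw [hΦ]; exact hh₀
  set M := ⨆ h : Fin d → ℝ, Φ h with hM
  have hMbot : M ≠ ⊥ := by
    intro h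
    apply hΦh₀bot
    have h2 : Φ h₀ ≤ M := by rw [hM]; exact le_iSup Φ h₀
    rw [h] at h2
    exact le_bot_iff.1 h2
  have hMtop : M ≠ ⊤ := by
    rw [hM]
    exact (lt_of_le_of_lt (iSup_le fun h => ΦleC h) (EReal.coe_lt_top C)).ne
  set μ := M.toReal with hμdef
  have hμ : M = (μ : EReal) := (EReal.coe_toReal hMtop hMbot).symm
  have hTne : ∀ n : ℕ, ∃ h : Fin d → ℝ, ((μ - 1/(n+1) : ℝ) : EReal) < Φ h := by
    intro n
    have h1 : ((μ - 1/(n+1) : ℝ) : EReal) < M := by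
      rw [hμ]
      refine EReal.coe_lt_coe_iff.2 ?_
      have h0 : (0:ℝ) < 1/((n:ℝ)+1) := by positivity
      linarith
    rw [hM] at h1
    exact lt_iSup_iff.1 h1
  set T : ℕ → Set (Fin d → ℝ) := fun n => {h | ((μ - 1/(n+1) : ℝ) : EReal) ≤ Φ h} with hT
  set ρ : ℕ → ℝ := fun n => sInf (norm '' T n) with hρ
  have hbddT : ∀ n, BddBelow (norm '' T n) := by
    intro n
    refine ⟨0, fun y hy => ?_⟩
    obtain ⟨h, -, rfl⟩ := hy
    exact norm_nonneg h
  have hρle : ∀ (n : ℕ) (h : Fin d → ℝ),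
      ((μ - 1/(n+1) : ℝ) : EReal) ≤ Φ h → ρ n ≤ ‖h‖ := by
    intro n h hh
    rw [hρ]
    exact csInf_le (hbddT n) (Set.mem_image_of_mem _ (by rw [hT]; exact hh))
  have hex : ∀ n : ℕ, ∃ h : Fin d → ℝ,
      (((μ - 1/(n+1) : ℝ) : EReal) ≤ Φ h) ∧ ‖h‖ < ρ n + 1 := by
    intro n
    obtain ⟨h, hh⟩ := hTne n
    have hne2 : (norm '' T n).Nonempty :=
      ⟨‖h‖, Set.mem_image_of_mem _ (by rw [hT]; exact hh.le)⟩
    obtain ⟨y, hy, hylt⟩ := exists_lt_of_csInf_lt hne2 (lt_add_one (sInf (norm '' T n)))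
    obtain ⟨h', hh', rfl⟩ := hy
    rw [hT] at hh'
    refine ⟨h', hh', ?_⟩
    rw [hρ]
    exact hylt
  choose hseq hseq_mem hseq_norm using hex
  by_cases hBdd : ∃ R : ℝ, ∀ n, ‖hseq n‖ ≤ R
  · obtain ⟨R, hR⟩ := hBdd
    have hball : ∀ n, hseq n ∈ Metric.closedBall (0 : Fin d → ℝ) R := fun n => by
      rw [Metric.mem_closedBall, dist_zero_right]; exact hR n
    obtain ⟨hhat, -, φ, hφ, hφt⟩ :=
      (isCompact_closedBall (0 : Fin d → ℝ) R).tendsto_subseq hball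
    refine ⟨hhat, le_antisymm ?_ ?_⟩
    · rw [hM]; exact le_iSup Φ hhat
    have hφatTop : Tendsto φ atTop atTop := hφ.tendsto_atTop
    have hc : Tendsto (fun j => μ - 1/((φ j : ℝ) + 1)) atTop (𝓝 μ) := by
      have h8 : Tendsto (fun j : ℕ => 1/((φ j : ℝ) + 1)) atTop (𝓝 0) :=
        tendsto_one_div_add_atTop_nhds_zero_nat.comp hφatTop
      have h9 := (tendsto_const_nhds (x := μ)).sub h8
      rw [sub_zero] at h9
      exact h9
    have h10 := hypo (fun j => hseq (φ j)) hhat hφt _ μ hc (fun j => hseq_mem (φ j))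
    rw [hμ]
    exact h10
  · push_neg at hBdd
    exfalso
    have hψex : ∀ j : ℕ, ∃ n, (j : ℝ) + 3 < ‖hseq n‖ := fun j => hBdd ((j : ℝ) + 3)
    choose ψ hψ using hψex
    have hgpos : ∀ j, (0:ℝ) < ‖hseq (ψ j)‖ := fun j => by
      have h11 := hψ j
      have h12 : (0:ℝ) ≤ (j : ℝ) := Nat.cast_nonneg j
      linarith
    set uvec : ℕ → (Fin d → ℝ) := fun j => ‖hseq (ψ j)‖⁻¹ • hseq (ψ j) with huvec
    have husph : ∀ j, uvec j ∈ Metric.sphere (0 : Fin d → ℝ) 1 := by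
      intro j
      rw [mem_sphere_zero_iff_norm, huvec]
      simp only [norm_smul, norm_inv, norm_norm]
      exact inv_mul_cancel₀ (hgpos j).ne'
    obtain ⟨dvec, -, σ, hσ, hσt⟩ :=
      (isCompact_sphere (0 : Fin d → ℝ) 1).tendsto_subseq husph
    have hgn' : ∀ j : ℕ, (j : ℝ) + 3 ≤ ‖hseq (ψ (σ j))‖ := by
      intro j
      have h13 : (j : ℝ) ≤ (σ j : ℝ) := by exact_mod_cast hσ.le_apply
      have h14 := hψ (σ j)
      linarith
    have hgpos' : ∀ j, (0:ℝ) < ‖hseq (ψ (σ j))‖ := fun j => hgpos (σ j)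
    obtain ⟨r1, -, hr1⟩ := EReal.exists_between_coe_real (bot_lt_iff_ne_bot.2 hΦh₀bot)
    have hr1le : (r1 : EReal) ≤ Φ h₀ := hr1.le
    have hr1C : r1 ≤ C := EReal.coe_le_coe_iff.1 (hr1le.trans (ΦleC h₀))
    have hμΦ : ∀ j : ℕ, ((μ - 1 : ℝ) : EReal) ≤ Φ (hseq (ψ (σ j))) := by
      intro j
      refine le_trans (EReal.coe_le_coe_iff.2 ?_) (hseq_mem (ψ (σ j)))
      have h15 : 1/((ψ (σ j) : ℝ) + 1) ≤ 1 := by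
        rw [div_le_one (by positivity)]
        have h16 : (0:ℝ) ≤ (ψ (σ j) : ℝ) := Nat.cast_nonneg _
        linarith
      linarith
    have stepA : ∀ t : ℝ, 0 ≤ t → (r1 : EReal) ≤ Φ (h₀ + t • dvec) := by
      intro t ht
      set lam : ℕ → ℝ := fun j => t / ‖hseq (ψ (σ j))‖ with hlamdef
      have hlamnn : ∀ j, 0 ≤ lam j := fun j => div_nonneg ht (hgpos' j).le
      have hlamle : ∀ j, lam j ≤ t / ((j : ℝ) + 3) := by
        intro j
        rw [hlamdef]
        exact div_le_div_of_nonneg_left ht (by positivity) (hgn' j)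
      have hlam0 : Tendsto lam atTop (𝓝 0) := by
        have hupper : Tendsto (fun j : ℕ => t / ((j : ℝ) + 3)) atTop (𝓝 0) := by
          have h16 := (tendsto_one_div_add_atTop_nhds_zero_nat.comp
            (tendsto_add_atTop_nat 2)).const_mul t
          rw [mul_zero] at h16
          refine h16.congr fun j => ?_
          show t * (1 / (((j + 2 : ℕ) : ℝ) + 1)) = t / ((j : ℝ) + 3)
          push_cast
          ring
        exact tendsto_of_tendsto_of_tendsto_of_le_of_le tendsto_const_nhds hupper hlamnn hlamle
      obtain ⟨J₀, hJ₀⟩ := eventually_atTop.1 (hlam0.eventually (eventually_lt_nhds zero_lt_one))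
      set w : ℕ → (Fin d → ℝ) := fun j =>
        (1 - lam (j + J₀)) • h₀ + lam (j + J₀) • hseq (ψ (σ (j + J₀))) with hw
      have hwt : Tendsto w atTop (𝓝 (h₀ + t • dvec)) := by
        have hT1 : Tendsto (fun j => (uvec ∘ σ) (j + J₀)) atTop (𝓝 dvec) :=
          hσt.comp (tendsto_add_atTop_nat J₀)
        have hT3 : Tendsto (fun j => lam (j + J₀)) atTop (𝓝 0) :=
          hlam0.comp (tendsto_add_atTop_nat J₀)
        have hT4 : Tendsto (fun j => h₀ + (t • (uvec ∘ σ) (j + J₀) - lam (j + J₀) • h₀))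
            atTop (𝓝 (h₀ + (t • dvec - (0:ℝ) • h₀))) :=
          tendsto_const_nhds.add ((hT1.const_smul t).sub (hT3.smul_const h₀))
        rw [zero_smul, sub_zero] at hT4
        refine hT4.congr fun j => ?_
        funext i2
        simp only [hw, hlamdef, huvec, Function.comp_apply, Pi.add_apply, Pi.sub_apply,
          Pi.smul_apply, smul_eq_mul]
        field_simp
        ring
      set c : ℕ → ℝ := fun j => (1 - lam (j + J₀)) * r1 + lam (j + J₀) * (μ - 1) with hcdef
      have hct : Tendsto c atTop (𝓝 r1) := by
        have hT3 : Tendsto (fun j => lam (j + J₀)) atTop (𝓝 0) :=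
          hlam0.comp (tendsto_add_atTop_nat J₀)
        have hT5 : Tendsto (fun j => r1 + lam (j + J₀) * (μ - 1 - r1)) atTop
            (𝓝 (r1 + 0 * (μ - 1 - r1))) :=
          (tendsto_const_nhds (x := r1)).add (hT3.mul_const (μ - 1 - r1))
        rw [zero_mul, add_zero] at hT5
        refine hT5.congr fun j => ?_
        rw [hcdef]
        ring
      have hcle : ∀ j, (c j : EReal) ≤ Φ (w j) := by
        intro j
        have hlt1 : lam (j + J₀) < 1 := hJ₀ (j + J₀) (Nat.le_add_left J₀ j)
        simp only [hcdef, hw]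
        exact comboΦ _ _ (by linarith) (hlamnn _) (by ring) h₀ (hseq (ψ (σ (j + J₀))))
          r1 (μ - 1) hr1le (hμΦ (j + J₀))
      exact hypo w _ hwt c r1 hct hcle
    have hbase2 : ∀ i, ∫⁻ ω, erealToENNReal ((C : EReal) - Ψ ω h₀) ∂(P i)
        ≤ ENNReal.ofReal (C - r1) := fun i =>
      (Stmt10Aux.coe_le_expE_iff hr1C).1 (hr1le.trans (Φle _ i))
    have hints2 : ∀ i, ∀ n : ℕ+,
        ∫⁻ ω, erealToENNReal ((C : EReal) - Ψ ω (h₀ + (n : ℝ) • dvec)) ∂(P i)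
        ≤ ENNReal.ofReal (C - r1) := by
      intro i n
      refine (Stmt10Aux.coe_le_expE_iff hr1C).1 ((stepA (n : ℝ) ?_).trans (Φle _ i))
      exact_mod_cast (Nat.zero_le (n : ℕ))
    have hqs : ∀ i, ∀ᵐ ω ∂(P i), 0 ≤ hor (Ψ ω) h₀ dvec := fun i =>
      Stmt10Aux.step4 hmeas' hconc hbd ENNReal.ofReal_ne_top (hbase2 i) (hints2 i)
    obtain ⟨S, hSset⟩ := hNA
    have hdS : dvec ∈ (S : Set (Fin d → ℝ)) := by rw [hSset]; exact hqs
    have hqs' : ∀ i, ∀ᵐ ω ∂(P i), 0 ≤ hor (Ψ ω) h₀ (-dvec) := by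
      have h10 : -dvec ∈ (S : Set (Fin d → ℝ)) := S.neg_mem hdS
      rw [hSset] at h10
      exact h10
    obtain ⟨J, hJ⟩ := Metric.tendsto_atTop.1 hσt (1/3) (by norm_num)
    have hdistJ : ‖(uvec ∘ σ) J - dvec‖ < 1/3 := by
      have h17 := hJ J le_rfl
      rwa [dist_eq_norm] at h17
    have hmono : ∀ i, ∀ᵐ ω ∂(P i),
        Ψ ω (hseq (ψ (σ J))) ≤ Ψ ω (hseq (ψ (σ J)) + (3:ℝ) • (-dvec)) := by
      intro i
      have hSae : ∀ᵐ ω ∂(P i), Ψ ω h₀ ≠ ⊥ := by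
        filter_upwards [MeasureTheory.ae_lt_top (Stmt10Aux.measurable_U (hmeas' h₀))
          ((lt_of_le_of_lt (hbase2 i) ENNReal.ofReal_lt_top)).ne] with ω hω hbot
        rw [hbot, Stmt10Aux.e2e_sub_bot] at hω
        exact absurd hω (lt_irrefl _)
      filter_upwards [hqs' i, hSae] with ω h1 h2
      obtain ⟨r, hr⟩ : ∃ r : ℝ, Ψ ω h₀ = (r : EReal) :=
        ⟨(Ψ ω h₀).toReal,
          (EReal.coe_toReal (lt_of_le_of_lt (hbd ω h₀) (EReal.coe_lt_top C)).ne h2).symm⟩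
      have hrec : ∀ n : ℕ+, Ψ ω h₀ ≤ Ψ ω (h₀ + (n : ℝ) • (-dvec)) := by
        intro n
        calc Ψ ω h₀ = (r : EReal) := hr
          _ ≤ _ := Stmt10Aux.steps_of_hor_nonneg hr h1 n
      exact Stmt10Aux.L1 (hconc ω) (husc ω) h2 hrec (hseq (ψ (σ J)))
        (by norm_num : (0:ℝ) ≤ 3)
    have hΦmono : Φ (hseq (ψ (σ J))) ≤ Φ (hseq (ψ (σ J)) + (3:ℝ) • (-dvec)) := by
      rw [hΦ]
      exact iInf_mono fun i => Stmt10Aux.expE_mono_ae (hmono i)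
    have hmem2 : ((μ - 1/((ψ (σ J) : ℝ) + 1) : ℝ) : EReal)
        ≤ Φ (hseq (ψ (σ J)) + (3:ℝ) • (-dvec)) := (hseq_mem (ψ (σ J))).trans hΦmono
    have hρ2 : ρ (ψ (σ J)) ≤ ‖hseq (ψ (σ J)) + (3:ℝ) • (-dvec)‖ := hρle _ _ hmem2
    have hnn : (3:ℝ) ≤ ‖hseq (ψ (σ J))‖ := by
      have h18 := hgn' J
      have h19 : (0:ℝ) ≤ (J : ℝ) := Nat.cast_nonneg J
      linarith
    have hkey : ‖hseq (ψ (σ J)) + (3:ℝ) • (-dvec)‖ ≤ ‖hseq (ψ (σ J))‖ - 2 := by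
      have hid : hseq (ψ (σ J)) + (3:ℝ) • (-dvec)
          = (hseq (ψ (σ J)) - (3:ℝ) • ((uvec ∘ σ) J)) + (3:ℝ) • ((uvec ∘ σ) J - dvec) := by
        funext i2
        simp only [Pi.add_apply, Pi.sub_apply, Pi.smul_apply, Pi.neg_apply, smul_eq_mul]
        ring
      have hn1 : ‖hseq (ψ (σ J)) - (3:ℝ) • ((uvec ∘ σ) J)‖ = ‖hseq (ψ (σ J))‖ - 3 := by
        have hid2 : hseq (ψ (σ J)) - (3:ℝ) • ((uvec ∘ σ) J)
            = (1 - 3/‖hseq (ψ (σ J))‖) • hseq (ψ (σ J)) := by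
          funext i2
          simp only [huvec, Function.comp_apply, Pi.sub_apply, Pi.smul_apply, smul_eq_mul]
          field_simp
        rw [hid2, norm_smul, Real.norm_eq_abs,
          abs_of_nonneg (by rw [sub_nonneg, div_le_one (hgpos' J)]; exact hnn)]
        rw [sub_mul, one_mul, div_mul_cancel₀ _ (hgpos' J).ne']
      calc ‖hseq (ψ (σ J)) + (3:ℝ) • (-dvec)‖
          ≤ ‖hseq (ψ (σ J)) - (3:ℝ) • ((uvec ∘ σ) J)‖
            + ‖(3:ℝ) • ((uvec ∘ σ) J - dvec)‖ := by rw [hid]; exact norm_add_le _ _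
        _ = (‖hseq (ψ (σ J))‖ - 3) + 3 * ‖(uvec ∘ σ) J - dvec‖ := by
            rw [hn1, norm_smul, Real.norm_eq_abs, abs_of_nonneg (by norm_num : (0:ℝ) ≤ 3)]
        _ ≤ (‖hseq (ψ (σ J))‖ - 3) + 3 * (1/3) := by
            have h20 : 3 * ‖(uvec ∘ σ) J - dvec‖ ≤ 3 * (1/3) := by
              have := hdistJ.le
              linarith
            linarith
        _ = ‖hseq (ψ (σ J))‖ - 2 := by ring
    have hub : ‖hseq (ψ (σ J))‖ < ρ (ψ (σ J)) + 1 := hseq_norm (ψ (σ J))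
    linarith
end

section
/- Composition rule for horizon functions: let U : ℝ → ℝ ∪ {-∞} be concave, nondecreasing, nonconstant and upper-semicontinuous, and V : ℝ^n → ℝ concave and upper-semicontinuous with V(ℝ^n) ∩ dom U ≠ ∅. Set Ψ := U ∘ V. Then for every h ∈ ℝ^n: Ψ^∞(h) = U^∞(V^∞(h)) if V^∞(h) > -∞, and Ψ^∞(h) = -∞ otherwise. -/
open MeasureTheory Filter
open scoped ENNReal

/-- Concave slope inequality for `EReal`-valued concave functions on `ℝ`. -/
lemma slope_le_aux (U : ℝ → EReal) (hU : IsConcaveE U) {y c : ℝ} (hc : U y = (c : EReal))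
    (hUtop : ∀ t, U t ≠ ⊤) (d : ℝ) {m nn : ℕ+} (hmn : m ≤ nn) :
    ((nn : ℝ)⁻¹ : EReal) * (U (y + (nn : ℝ) * d) - (c : EReal)) ≤
      ((m : ℝ)⁻¹ : EReal) * (U (y + (m : ℝ) * d) - (c : EReal)) := by
  have hm0 : (0:ℝ) < (m:ℝ) := by exact_mod_cast m.pos
  have hn0 : (0:ℝ) < (nn:ℝ) := by exact_mod_cast nn.pos
  have hmn' : (m:ℝ) ≤ (nn:ℝ) := by exact_mod_cast hmn
  rw [← EReal.coe_inv, ← EReal.coe_inv]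
  set l : ℝ := (m:ℝ) / (nn:ℝ) with hl
  have hl0 : 0 ≤ l := div_nonneg hm0.le hn0.le
  have hl1 : l ≤ 1 := (div_le_one hn0).2 hmn'
  have hcomb : l • (y + (nn:ℝ) * d) + (1 - l) • y = y + (m:ℝ) * d := by
    rw [smul_eq_mul, smul_eq_mul, hl]
    field_simp
    ring
  have hconc := hU (y + (nn:ℝ) * d) y l (1 - l) hl0 (by linarith) (by ring)
  rw [hcomb, hc] at hconc
  rcases eq_or_ne (U (y + (nn:ℝ) * d)) ⊥ with hb | hb
  · rw [hb, EReal.bot_sub, EReal.mul_bot_of_pos (EReal.coe_pos.2 (inv_pos.2 hn0))]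
    exact bot_le
  · obtain ⟨u, hu⟩ : ∃ u : ℝ, U (y + (nn:ℝ) * d) = (u : EReal) :=
      ⟨_, (EReal.coe_toReal (hUtop _) hb).symm⟩
    rw [hu] at hconc
    have hconc' : ((l * u + (1 - l) * c : ℝ) : EReal) ≤ U (y + (m:ℝ) * d) := by
      push_cast
      exact hconc
    obtain ⟨w, hw⟩ : ∃ w : ℝ, U (y + (m:ℝ) * d) = (w : EReal) := by
      refine ⟨_, (EReal.coe_toReal (hUtop _) ?_).symm⟩
      intro h
      rw [h, le_bot_iff] at hconc'
      exact EReal.coe_ne_bot _ hconc'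
    rw [hw] at hconc' ⊢
    rw [hu]
    have hlw : l * u + (1 - l) * c ≤ w := by exact_mod_cast hconc'
    rw [← EReal.coe_sub, ← EReal.coe_sub, ← EReal.coe_mul, ← EReal.coe_mul,
      EReal.coe_le_coe_iff]
    have key : (nn:ℝ)⁻¹ * (u - c) = (m:ℝ)⁻¹ * (l * (u - c)) := by
      rw [hl]; field_simp
    rw [key]
    apply mul_le_mul_of_nonneg_left _ (inv_nonneg.2 hm0.le)
    nlinarith

/-- A nonconstant nondecreasing concave function is unbounded below. -/
lemma U_unbdd_aux (U : ℝ → EReal) (hU : IsConcaveE U) (hmono : Monotone U)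
    (hnc : ∃ a b : ℝ, U a ≠ U b) (htop : ∀ t, U t ≠ ⊤) (M : ℝ) :
    ∃ t : ℝ, U t < (M : EReal) := by
  obtain ⟨a, b, hab⟩ := hnc
  obtain ⟨p, q, hpq, hUpq⟩ : ∃ p q : ℝ, p < q ∧ U p < U q := by
    rcases lt_trichotomy a b with h | h | h
    · exact ⟨a, b, h, lt_of_le_of_ne (hmono h.le) hab⟩
    · exact absurd (congrArg U h) hab
    · exact ⟨b, a, h, lt_of_le_of_ne (hmono h.le) (Ne.symm hab)⟩
  rcases eq_or_ne (U p) ⊥ with hb | hb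
  · exact ⟨p, hb ▸ bot_lt_iff_ne_bot.2 (EReal.coe_ne_bot M)⟩
  obtain ⟨p₀, hp₀⟩ : ∃ r : ℝ, U p = (r : EReal) := ⟨_, (EReal.coe_toReal (htop _) hb).symm⟩
  have hqb : U q ≠ ⊥ := fun hh => absurd (hh ▸ hUpq) (by simp)
  obtain ⟨q₀, hq₀⟩ : ∃ r : ℝ, U q = (r : EReal) := ⟨_, (EReal.coe_toReal (htop _) hqb).symm⟩
  have hpq0 : p₀ < q₀ := by rw [hp₀, hq₀] at hUpq; exact_mod_cast hUpq
  set s : ℝ := max 1 ((p₀ - M + 1) / (q₀ - p₀)) with hs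
  have hs1 : 1 ≤ s := le_max_left _ _
  have hs0 : 0 < s := lt_of_lt_of_le one_pos hs1
  have hqp0 : 0 < q₀ - p₀ := by linarith
  have hs2 : p₀ - M + 1 ≤ s * (q₀ - p₀) := by
    have h1 := le_max_right 1 ((p₀ - M + 1) / (q₀ - p₀))
    have h2 := mul_le_mul_of_nonneg_right (h1.trans_eq hs.symm) hqp0.le
    rwa [div_mul_cancel₀ _ hqp0.ne'] at h2
  set t : ℝ := p - s * (q - p) with ht
  have h1s : 0 < 1 + s := by linarith
  set l : ℝ := 1 / (1 + s) with hldef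
  have hl0 : 0 ≤ l := by positivity
  have hl1' : 1 - l = s / (1 + s) := by rw [hldef]; field_simp; ring
  have hcomb : l • t + (1 - l) • q = p := by
    rw [smul_eq_mul, smul_eq_mul, hl1', hldef, ht]
    field_simp
    ring
  have hconc := hU t q l (1 - l) hl0 (by rw [hl1']; positivity) (by ring)
  rw [hcomb, hp₀, hq₀] at hconc
  rcases eq_or_ne (U t) ⊥ with hbt | hbt
  · exact ⟨t, hbt ▸ bot_lt_iff_ne_bot.2 (EReal.coe_ne_bot M)⟩
  obtain ⟨t₀, ht₀⟩ : ∃ r : ℝ, U t = (r : EReal) := ⟨_, (EReal.coe_toReal (htop _) hbt).symm⟩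
  rw [ht₀] at hconc
  have hconc' : l * t₀ + (1 - l) * q₀ ≤ p₀ := by exact_mod_cast hconc
  refine ⟨t, ?_⟩
  rw [ht₀, EReal.coe_lt_coe_iff]
  rw [hl1', hldef] at hconc'
  have hkey : t₀ + s * q₀ ≤ (1 + s) * p₀ := by
    have hh := mul_le_mul_of_nonneg_left hconc' h1s.le
    calc t₀ + s * q₀ = (1 + s) * (1 / (1 + s) * t₀ + s / (1 + s) * q₀) := by
          field_simp
      _ ≤ (1 + s) * p₀ := hh
  nlinarith


/-- composition rule for horizon functions: with `Ψ := U ∘ V`,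
`Ψ^∞(h) = U^∞(V^∞(h))` whenever `V^∞(h) > -∞`, and `Ψ^∞(h) = -∞` otherwise.
Horizon functions are taken with base points `h₀` (resp. `V h₀`), where
`U (V h₀) ≠ -∞` witnesses `V(ℝ^n) ∩ dom U ≠ ∅`. -/
theorem stmt12 {n : ℕ} (U : ℝ → EReal)
    (hUconc : IsConcaveE U) (hUmono : Monotone U)
    (hUnonconst : ∃ a b : ℝ, U a ≠ U b)
    (hUusc : UpperSemicontinuous U) (hUne_top : ∀ y, U y ≠ ⊤)
    (V : (Fin n → ℝ) → ℝ) (hVconc : ConcaveOn ℝ Set.univ V)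
    (hVusc : UpperSemicontinuous V)
    (h₀ : Fin n → ℝ) (hprop : U (V h₀) ≠ ⊥) :
    ∀ h : Fin n → ℝ,
      (hor (fun z => ((V z : ℝ) : EReal)) h₀ h ≠ ⊥ →
        hor (fun z => U (V z)) h₀ h
          = hor U (V h₀) ((hor (fun z => ((V z : ℝ) : EReal)) h₀ h).toReal)) ∧
      (hor (fun z => ((V z : ℝ) : EReal)) h₀ h = ⊥ →
        hor (fun z => U (V z)) h₀ h = ⊥) := by
  intro h
  obtain ⟨c, hc⟩ : ∃ c : ℝ, U (V h₀) = (c : EReal) :=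
    ⟨_, (EReal.coe_toReal (hUne_top _) hprop).symm⟩
  set y : ℝ := V h₀ with hy
  have hn0 : ∀ k : ℕ+, (0:ℝ) < (k:ℝ) := fun k => by exact_mod_cast k.pos
  set g : ℕ+ → ℝ := fun k => ((k:ℝ))⁻¹ * (V (h₀ + (k:ℝ) • h) - y) with hg
  have hVn : ∀ k : ℕ+, V (h₀ + (k:ℝ) • h) = y + (k:ℝ) * g k := by
    intro k
    have hne := (hn0 k).ne'
    rw [hg]
    field_simp
    ring
  have hhorV : hor (fun z => ((V z : ℝ) : EReal)) h₀ h = ⨅ k : ℕ+, ((g k : ℝ) : EReal) := by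
    unfold hor
    refine iInf_congr fun k => ?_
    rw [hg]
    simp only [← EReal.coe_inv, ← EReal.coe_sub, ← EReal.coe_mul]
    rfl
  have hΨ : hor (fun z => U (V z)) h₀ h
      = ⨅ k : ℕ+, (((k:ℝ))⁻¹ : EReal) * (U (y + (k:ℝ) * g k) - (c : EReal)) := by
    unfold hor
    refine iInf_congr fun k => ?_
    simp only []
    rw [hVn k, ← hy, hc]
  -- concavity of t ↦ V (h₀ + t • h) as EReal valued
  have hW : IsConcaveE (fun t : ℝ => ((V (h₀ + t • h) : ℝ) : EReal)) := by
    intro s t a b ha hb hab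
    simp only [smul_eq_mul, ← EReal.coe_mul, ← EReal.coe_add, EReal.coe_le_coe_iff]
    have hvc := hVconc.2 (Set.mem_univ (h₀ + s • h)) (Set.mem_univ (h₀ + t • h)) ha hb hab
    have harg : a • (h₀ + s • h) + b • (h₀ + t • h) = h₀ + (a * s + b * t) • h := by
      have hmod : a • (h₀ + s • h) + b • (h₀ + t • h)
          = (a + b) • h₀ + (a * s + b * t) • h := by module
      rw [hmod, hab, one_smul]
    rw [harg] at hvc
    simpa [smul_eq_mul] using hvc
  have hganti : Antitone g := by
    intro m nn hmn
    have hWc : (fun t : ℝ => ((V (h₀ + t • h) : ℝ) : EReal)) 0 = ((y:ℝ) : EReal) := by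
      simp [hy]
    have hs := slope_le_aux _ hW hWc (fun t => EReal.coe_ne_top _) 1 hmn
    simp only [zero_add, mul_one] at hs
    rw [← EReal.coe_inv, ← EReal.coe_inv, ← EReal.coe_sub, ← EReal.coe_sub,
      ← EReal.coe_mul, ← EReal.coe_mul, EReal.coe_le_coe_iff] at hs
    exact hs
  constructor
  · -- main case
    intro hne
    have hVne_top : hor (fun z => ((V z : ℝ) : EReal)) h₀ h ≠ ⊤ := by
      rw [hhorV]
      exact ne_top_of_le_ne_top (EReal.coe_ne_top (g 1)) (iInf_le _ 1)
    set a : ℝ := (hor (fun z => ((V z : ℝ) : EReal)) h₀ h).toReal with hadef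
    have haeq : ((a : ℝ) : EReal) = ⨅ k : ℕ+, ((g k : ℝ) : EReal) := by
      rw [hadef, ← hhorV]
      exact EReal.coe_toReal hVne_top hne
    have hag : ∀ k : ℕ+, a ≤ g k := fun k =>
      EReal.coe_le_coe_iff.1 (haeq.trans_le (iInf_le _ k))
    have hbdd : BddBelow (Set.range g) := ⟨a, by rintro x ⟨k, rfl⟩; exact hag k⟩
    have hinfg : (⨅ k, g k : ℝ) = a := by
      refine le_antisymm ?_ (le_ciInf hag)
      have hle : ((⨅ k, g k : ℝ) : EReal) ≤ ((a : ℝ) : EReal) := by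
        rw [haeq]
        exact le_iInf fun k => EReal.coe_le_coe_iff.2 (ciInf_le hbdd k)
      exact_mod_cast hle
    have hgtend : Tendsto g atTop (nhds a) := by
      have := tendsto_atTop_ciInf hganti hbdd
      rwa [hinfg] at this
    have hUa : hor U y a
        = ⨅ k : ℕ+, (((k:ℝ))⁻¹ : EReal) * (U (y + (k:ℝ) * a) - (c : EReal)) := by
      unfold hor
      refine iInf_congr fun k => ?_
      rw [smul_eq_mul, hc]
    rw [hΨ, hUa]
    refine le_antisymm (le_iInf fun m => ?_) (le_iInf fun k => iInf_le_of_le k ?_)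
    · -- hard direction
      by_contra hlt
      push_neg at hlt
      obtain ⟨r, hr1, hr2⟩ := EReal.lt_iff_exists_real_btwn.1 hlt
      have hm0 : (0:ℝ) < (m:ℝ) := hn0 m
      have hwz : U (y + (m:ℝ) * a) < (((m:ℝ) * r + c : ℝ) : EReal) := by
        rcases eq_or_ne (U (y + (m:ℝ) * a)) ⊥ with hb | hb
        · rw [hb]; exact bot_lt_iff_ne_bot.2 (EReal.coe_ne_bot _)
        · obtain ⟨w, hw⟩ : ∃ w : ℝ, U (y + (m:ℝ) * a) = (w : EReal) :=
            ⟨_, (EReal.coe_toReal (hUne_top _) hb).symm⟩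
          rw [hw] at hr1 ⊢
          rw [← EReal.coe_inv, ← EReal.coe_sub, ← EReal.coe_mul,
            EReal.coe_lt_coe_iff] at hr1
          rw [EReal.coe_lt_coe_iff]
          have hmm : (m:ℝ) * ((m:ℝ)⁻¹ * (w - c)) = w - c := by field_simp
          nlinarith [mul_lt_mul_of_pos_left hr1 hm0]
      have htd : Tendsto (fun k : ℕ+ => y + (m:ℝ) * g k) atTop (nhds (y + (m:ℝ) * a)) :=
        tendsto_const_nhds.add (tendsto_const_nhds.mul hgtend)
      have hev := htd.eventually (hUusc (y + (m:ℝ) * a) _ hwz)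
      obtain ⟨nn, hUn, hnm⟩ := (hev.and (eventually_ge_atTop m)).exists
      have h1 : (⨅ k : ℕ+, (((k:ℝ))⁻¹ : EReal) * (U (y + (k:ℝ) * g k) - (c : EReal)))
          ≤ (((nn:ℝ))⁻¹ : EReal) * (U (y + (nn:ℝ) * g nn) - (c : EReal)) := iInf_le _ nn
      have h2 := slope_le_aux U hUconc hc hUne_top (g nn) hnm
      have h3 : (((m:ℝ))⁻¹ : EReal) * (U (y + (m:ℝ) * g nn) - (c : EReal)) ≤ (r : EReal) := by
        have hsub : U (y + (m:ℝ) * g nn) - (c : EReal)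
            ≤ (((m:ℝ) * r + c : ℝ) : EReal) - (c : EReal) := EReal.sub_le_sub hUn.le le_rfl
        have hmul := mul_le_mul_of_nonneg_left hsub
          (show (0:EReal) ≤ (((m:ℝ))⁻¹ : EReal) by
            rw [← EReal.coe_inv]; exact_mod_cast inv_nonneg.2 hm0.le)
        refine hmul.trans_eq ?_
        rw [← EReal.coe_inv, ← EReal.coe_sub, ← EReal.coe_mul, EReal.coe_eq_coe_iff]
        field_simp
        ring
      exact absurd (h1.trans (h2.trans h3)) (not_le.2 hr2)
    · -- easy direction
      have hk0 : (0:ℝ) < (k:ℝ) := hn0 k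
      have hmono' : U (y + (k:ℝ) * a) ≤ U (y + (k:ℝ) * g k) :=
        hUmono (by nlinarith [hag k])
      exact mul_le_mul_of_nonneg_left (EReal.sub_le_sub hmono' le_rfl)
        (by rw [← EReal.coe_inv]; exact_mod_cast inv_nonneg.2 hk0.le)
  · -- bottom case
    intro hbot
    rw [hΨ]
    rw [hhorV] at hbot
    have hub : ∀ M : ℝ, ∃ k : ℕ+, g k < M := by
      intro M
      by_contra hcon
      push_neg at hcon
      have hle : ((M : ℝ) : EReal) ≤ ⊥ := by
        rw [← hbot]
        exact le_iInf fun k => EReal.coe_le_coe_iff.2 (hcon k)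
      exact EReal.coe_ne_bot M (le_bot_iff.1 hle)
    refine le_bot_iff.1 ?_
    by_contra hcon
    rw [not_le] at hcon
    obtain ⟨r, -, hr2⟩ := EReal.lt_iff_exists_real_btwn.1 hcon
    obtain ⟨t, ht⟩ := U_unbdd_aux U hUconc hUmono hUnonconst hUne_top (r + c)
    obtain ⟨nn, hnn⟩ := hub (t - y)
    have h1 : (⨅ k : ℕ+, (((k:ℝ))⁻¹ : EReal) * (U (y + (k:ℝ) * g k) - (c : EReal)))
        ≤ (((nn:ℝ))⁻¹ : EReal) * (U (y + (nn:ℝ) * g nn) - (c : EReal)) := iInf_le _ nn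
    have h2 := slope_le_aux U hUconc hc hUne_top (g nn) nn.one_le
    have hU1 : U (y + ((1:ℕ+):ℝ) * g nn) ≤ U t := by
      apply hUmono
      push_cast
      linarith
    have h3 : ((((1:ℕ+):ℝ))⁻¹ : EReal) * (U (y + ((1:ℕ+):ℝ) * g nn) - (c : EReal))
        ≤ (r : EReal) := by
      have hsub : U (y + ((1:ℕ+):ℝ) * g nn) - (c : EReal)
          ≤ ((r + c : ℝ) : EReal) - (c : EReal) := EReal.sub_le_sub (hU1.trans ht.le) le_rfl
      have hmul := mul_le_mul_of_nonneg_left hsub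
        (show (0:EReal) ≤ ((((1:ℕ+):ℝ))⁻¹ : EReal) by
          rw [← EReal.coe_inv]; exact_mod_cast inv_nonneg.2 (hn0 1).le)
      refine hmul.trans_eq ?_
      rw [← EReal.coe_inv, ← EReal.coe_sub, ← EReal.coe_mul, EReal.coe_eq_coe_iff]
      push_cast
      ring
    exact absurd (h1.trans (h2.trans h3)) (not_le.2 hr2)
end

section
/- Monotone no-arbitrage transfer: let U : ℝ → ℝ ∪ {-∞} be nondecreasing, concave, upper-semicontinuous and nonconstant, V : ℝ^n → ℝ concave and upper-semicontinuous, and Ψ = U ∘ V proper. If the set {h ∈ ℝ^n : V^∞(h) ≥ 0} is a linear subspace, then the set {h ∈ ℝ^n : Ψ^∞(h) ≥ 0} is also a linear subspace. -/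
open MeasureTheory Filter
open scoped ENNReal

/-- monotone no-arbitrage transfer: if `{h | V^∞(h) ≥ 0}` is a linear
subspace, then so is `{h | Ψ^∞(h) ≥ 0}` for `Ψ = U ∘ V` proper. -/
theorem stmt14 {n : ℕ} (U : ℝ → EReal)
    (hUconc : IsConcaveE U) (hUmono : Monotone U)
    (hUnonconst : ∃ a b : ℝ, U a ≠ U b)
    (hUusc : UpperSemicontinuous U) (hUne_top : ∀ y, U y ≠ ⊤)
    (V : (Fin n → ℝ) → ℝ) (hVconc : ConcaveOn ℝ Set.univ V)
    (hVusc : UpperSemicontinuous V)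
    (h₀ : Fin n → ℝ) (hprop : U (V h₀) ≠ ⊥)
    (hlin : ∃ S : Submodule ℝ (Fin n → ℝ),
      (S : Set (Fin n → ℝ)) = {h | 0 ≤ hor (fun z => ((V z : ℝ) : EReal)) h₀ h}) :
    ∃ S : Submodule ℝ (Fin n → ℝ),
      (S : Set (Fin n → ℝ)) = {h | 0 ≤ hor (fun z => U (V z)) h₀ h} := by
  obtain ⟨S, hS⟩ := hlin
  obtain ⟨r, hr⟩ : ∃ r : ℝ, U (V h₀) = (r : EReal) :=
    ⟨(U (V h₀)).toReal, (EReal.coe_toReal (hUne_top _) hprop).symm⟩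
  -- Step 1: there is z₀ with U z₀ < U (V h₀)
  have hC : ∃ z₀ : ℝ, U z₀ < U (V h₀) := by
    by_cases hex : ∃ a, U a < U (V h₀)
    · exact hex
    push_neg at hex
    obtain ⟨a, b, hab⟩ := hUnonconst
    have hb' : ∃ b, U (V h₀) < U b := by
      rcases (hex a).lt_or_eq with h | h
      · exact ⟨a, h⟩
      rcases (hex b).lt_or_eq with h2 | h2
      · exact ⟨b, h2⟩
      · exact absurd (h ▸ h2 ▸ rfl) hab
    obtain ⟨b, hb⟩ := hb'
    set c := V h₀ with hc
    have hbc : c < b := by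
      by_contra hle
      exact absurd (hUmono (not_lt.1 hle)) (not_le.2 hb)
    set z : ℝ := 2 * c - b with hz
    have hcomb : ((1:ℝ)/2) • z + ((1:ℝ)/2) • b = c := by
      simp only [smul_eq_mul, hz]; ring
    have hkey := hUconc z b (1/2) (1/2)
      (by norm_num) (by norm_num) (by norm_num)
    rw [hcomb] at hkey
    rcases eq_or_ne (U z) ⊥ with hbot | hbot
    · exact ⟨z, by rw [hbot]; exact Ne.bot_lt hprop⟩
    obtain ⟨ζ, hζ⟩ : ∃ ζ : ℝ, U z = (ζ : EReal) :=
      ⟨(U z).toReal, (EReal.coe_toReal (hUne_top _) hbot).symm⟩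
    obtain ⟨β, hβ⟩ : ∃ β : ℝ, U b = (β : EReal) :=
      ⟨(U b).toReal, (EReal.coe_toReal (hUne_top _) (by intro hB; rw [hB] at hb; exact absurd hb (by simp))).symm⟩
    rw [hζ, hβ, hr] at hkey
    rw [hr, hβ] at hb
    have hb' : r < β := by exact_mod_cast hb
    have hkey' : (1/2 : ℝ) * ζ + (1/2 : ℝ) * β ≤ r := by exact_mod_cast hkey
    refine ⟨z, ?_⟩
    rw [hζ, hr]
    have : ζ < r := by linarith
    exact_mod_cast this
  obtain ⟨z₀, hz₀⟩ := hC
  -- Step 2: each side of the set equality reduces to a ∀ n condition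
  have hV_iff : ∀ h : Fin n → ℝ, (0 ≤ hor (fun z => ((V z : ℝ) : EReal)) h₀ h) ↔
      ∀ m : ℕ+, V h₀ ≤ V (h₀ + (m : ℝ) • h) := by
    intro h
    rw [hor, le_iInf_iff]
    refine forall_congr' fun m => ?_
    have hm : (0:ℝ) < (m:ℝ)⁻¹ := by positivity
    have : ((m : ℝ)⁻¹ : EReal) * (((V (h₀ + (m:ℝ) • h) : ℝ) : EReal) - ((V h₀ : ℝ):EReal))
        = (((m:ℝ)⁻¹ * (V (h₀ + (m:ℝ) • h) - V h₀) : ℝ) : EReal) := by norm_cast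
    rw [this, EReal.coe_nonneg, mul_nonneg_iff_of_pos_left hm, sub_nonneg]
  have hΨ_iff : ∀ h : Fin n → ℝ, (0 ≤ hor (fun z => U (V z)) h₀ h) ↔
      ∀ m : ℕ+, U (V h₀) ≤ U (V (h₀ + (m : ℝ) • h)) := by
    intro h
    rw [hor, le_iInf_iff]
    refine forall_congr' fun m => ?_
    have hm : (0:ℝ) < (m:ℝ)⁻¹ := by positivity
    rcases eq_or_ne (U (V (h₀ + (m:ℝ) • h))) ⊥ with hbot | hbot
    · rw [hbot, hr]
      constructor
      · intro H
        exfalso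
        have : ((m:ℝ)⁻¹ : EReal) * ((⊥:EReal) - (r:EReal)) = ⊥ := by
          have : ((⊥:EReal) - (r:EReal)) = ⊥ := rfl
          rw [this]; exact EReal.coe_mul_bot_of_pos hm
        rw [this] at H
        simp at H
      · intro H; exact absurd H (by simp)
    · obtain ⟨s, hs⟩ : ∃ s : ℝ, U (V (h₀ + (m:ℝ) • h)) = (s : EReal) :=
        ⟨_, (EReal.coe_toReal (hUne_top _) hbot).symm⟩
      rw [hs, hr]
      have : ((m : ℝ)⁻¹ : EReal) * ((s:EReal) - (r:EReal))
          = (((m:ℝ)⁻¹ * (s - r) : ℝ) : EReal) := by norm_cast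
      rw [this, EReal.coe_nonneg, mul_nonneg_iff_of_pos_left hm, sub_nonneg, EReal.coe_le_coe_iff]
  -- Step 3: the two conditions are equivalent
  have hmain : ∀ h : Fin n → ℝ,
      (∀ m : ℕ+, V h₀ ≤ V (h₀ + (m : ℝ) • h)) ↔
      (∀ m : ℕ+, U (V h₀) ≤ U (V (h₀ + (m : ℝ) • h))) := by
    intro h
    constructor
    · intro H m; exact hUmono (H m)
    · intro H
      by_contra hcon
      push_neg at hcon
      obtain ⟨m, hm⟩ := hcon
      set d : ℝ := V (h₀ + (m:ℝ) • h) - V h₀ with hd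
      have hd0 : d < 0 := by simp [hd]; linarith
      -- chord lemma
      have hchord : ∀ k : ℕ+, V (h₀ + ((k * m : ℕ+) : ℝ) • h) ≤ V h₀ + (k:ℝ) * d := by
        intro k
        have hk1 : (1:ℝ) ≤ (k:ℝ) := by exact_mod_cast k.one_le
        have hk0 : (0:ℝ) < (k:ℝ) := by linarith
        have hcast : ((k * m : ℕ+) : ℝ) = (k:ℝ) * (m:ℝ) := by push_cast; ring
        have hknz : (k:ℝ) ≠ 0 := by linarith
        have hxy : (1/(k:ℝ)) • (h₀ + ((k:ℝ) * (m:ℝ)) • h) + (1 - 1/(k:ℝ)) • h₀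
            = h₀ + (m:ℝ) • h := by
          rw [smul_add, smul_smul]
          have h1 : 1/(k:ℝ) * ((k:ℝ) * (m:ℝ)) = (m:ℝ) := by field_simp
          rw [h1]
          module
        have ha1 : (0:ℝ) ≤ 1/(k:ℝ) := by positivity
        have hb1 : (0:ℝ) ≤ 1 - 1/(k:ℝ) := by
          rw [sub_nonneg, div_le_one hk0]; exact hk1
        have hab1 : 1/(k:ℝ) + (1 - 1/(k:ℝ)) = 1 := by ring
        have hcc := hVconc.2 (Set.mem_univ (h₀ + ((k:ℝ)*(m:ℝ)) • h)) (Set.mem_univ h₀)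
          ha1 hb1 hab1
        rw [hxy] at hcc
        simp only [smul_eq_mul] at hcc
        rw [hcast]
        have hVm : V (h₀ + (m:ℝ) • h) = V h₀ + d := by simp [hd]
        rw [hVm] at hcc
        have hmul := mul_le_mul_of_nonneg_left hcc (le_of_lt hk0)
        have hexp : (k:ℝ) * (1/(k:ℝ) * V (h₀ + ((k:ℝ)*(m:ℝ)) • h)
            + (1 - 1/(k:ℝ)) * V h₀)
            = V (h₀ + ((k:ℝ)*(m:ℝ)) • h) + ((k:ℝ) - 1) * V h₀ := by
          field_simp
        rw [hexp] at hmul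
        nlinarith [hmul]
      -- choose k large
      obtain ⟨N, hN⟩ := exists_nat_ge ((V h₀ - z₀) / (-d))
      set k : ℕ+ := ⟨N + 1, Nat.succ_pos N⟩ with hkdef
      have hkr : ((V h₀ - z₀) / (-d)) ≤ (k:ℝ) := by
        have : (N:ℝ) ≤ (k:ℝ) := by
          simp [hkdef]
        linarith
      have hle : V (h₀ + ((k * m : ℕ+) : ℝ) • h) ≤ z₀ := by
        have h1 := hchord k
        have hnd : (0:ℝ) < -d := by linarith
        have h2 : V h₀ - z₀ ≤ (k:ℝ) * (-d) := (div_le_iff₀ hnd).mp hkr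
        nlinarith [h1, h2]
      have := H (k * m)
      have hfin : U (V (h₀ + ((k * m : ℕ+) : ℝ) • h)) ≤ U z₀ := hUmono hle
      exact absurd this (not_le.2 (lt_of_le_of_lt hfin hz₀))
  refine ⟨S, ?_⟩
  rw [hS]
  ext h
  simp only [Set.mem_setOf_eq]
  rw [hV_iff h, hΨ_iff h, hmain h]
end
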